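/- arXiv:2009.03345 — 9 statements merged into one kernel-verified Lean document; each statement's English description precedes it below -/
import Mathlib

section
/- For every integer n ≥ 3 and real x > 0, Ψ_n(x) = Φ_n(−ω²)/ω^{φ(n)}, where ω = (x+√(x²+4))/2, Φ_n is the n-th cyclotomic polynomial, and φ is Euler's totient function. For n = 2, Ψ_2(x) = −Φ_2(−ω²)/ω. -/
open Polynomial

/-- The Fibonacci polynomials: `F 1 = 1`, `F 2 = X`, `F (n+2) = X * F (n+1) + F n`. -/
noncomputable def fibPoly : ℕ → Polynomial ℤ
  | 0 => 0
  | 1 => 1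
  | n + 2 => X * fibPoly (n + 1) + fibPoly n

lemma fib_closed (x ω β : ℝ) (hω : ω ^ 2 = x * ω + 1) (hβ : β ^ 2 = x * β + 1) :
    ∀ n : ℕ, (ω - β) * (aeval x (fibPoly n) : ℝ) = ω ^ n - β ^ n := by
  intro n
  induction n using Nat.strong_induction_on with
  | _ n ih =>
    match n with
    | 0 => simp [fibPoly]
    | 1 => simp [fibPoly]
    | (n+2) =>
      have h1 := ih (n+1) (by omega)
      have h0 := ih n (by omega)
      show (ω - β) * (aeval x (X * fibPoly (n+1) + fibPoly n) : ℝ) = _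
      simp only [map_add, map_mul, aeval_X]
      linear_combination x * h1 + h0 - ω ^ n * hω + β ^ n * hβ

noncomputable def Gf (x ω : ℝ) (d : ℕ) : ℝ :=
  if d = 1 then 1 else if d = 2 then x
  else (cyclotomic d ℝ).eval (-(ω ^ 2)) / ω ^ d.totient

lemma prodG (x ω : ℝ) (hx : 0 < x) (hω0 : 0 < ω) (hω2 : ω ^ 2 = x * ω + 1)
    (n : ℕ) (hn : 1 ≤ n) :
    ∏ d ∈ n.divisors, Gf x ω d = (aeval x (fibPoly n) : ℝ) := by
  have hωne : ω ≠ 0 := ne_of_gt hω0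
  set β : ℝ := -ω⁻¹ with hβdef
  have hβ : β ^ 2 = x * β + 1 := by
    rw [hβdef]; field_simp; linear_combination -hω2
  have hfib := fib_closed x ω β hω2 hβ
  set F : ℝ := (aeval x (fibPoly n) : ℝ) with hFdef
  have hωβ : ω * β = -1 := by rw [hβdef]; field_simp
  -- the H function
  set H : ℕ → ℝ := fun d => (cyclotomic d ℝ).eval (-(ω ^ 2)) / ω ^ d.totient with hHdef
  have hωpne : (ω : ℝ) ^ n ≠ 0 := pow_ne_zero _ hωne
  have hprodH : (∏ d ∈ n.divisors, H d) * ω ^ n = (-1) ^ n * ω ^ n * ((ω - β) * F) := by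
    have key : (-(ω ^ 2)) ^ n - 1 = (-1) ^ n * ω ^ n * ((ω - β) * F) := by
      rw [hfib n]
      have h1 : ω ^ n * β ^ n = (-1 : ℝ) ^ n := by rw [← mul_pow, hωβ]
      have h2 : ((-1 : ℝ) ^ n) * ((-1 : ℝ) ^ n) = 1 := by
        rw [← mul_pow]; norm_num
      have h3 : (-(ω ^ 2)) ^ n = (-1 : ℝ) ^ n * (ω ^ n * ω ^ n) := by
        rw [neg_pow, ← mul_pow, ← mul_pow]; ring_nf
      rw [h3]; linear_combination (-1 : ℝ) ^ n * h1 + h2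
    have e1 : ∏ d ∈ n.divisors, H d = ((-(ω ^ 2)) ^ n - 1) / ω ^ n := by
      rw [hHdef]
      rw [Finset.prod_div_distrib, ← eval_prod,
        prod_cyclotomic_eq_X_pow_sub_one (by omega) ℝ,
        Finset.prod_pow_eq_pow_sum, Nat.sum_totient]
      simp
    rw [e1, div_mul_cancel₀ _ hωpne, key]
  have hH1 : H 1 = -(ω ^ 2 + 1) / ω := by
    rw [hHdef]; simp [cyclotomic_one]; ring
  have hH2 : H 2 = -x := by
    rw [hHdef]; simp [cyclotomic_two, Nat.totient_two]
    field_simp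
    linear_combination -hω2
  have h1mem : 1 ∈ n.divisors := Nat.one_mem_divisors.mpr (by omega)
  have hcne : (ω ^ 2 + 1) / ω ≠ 0 := by positivity
  rcases Nat.even_or_odd n with he | ho
  · -- n even
    have h2mem : 2 ∈ (n.divisors).erase 1 := by
      rw [Finset.mem_erase, Nat.mem_divisors]
      exact ⟨by norm_num, he.two_dvd, by omega⟩
    set P : ℝ := ∏ d ∈ ((n.divisors).erase 1).erase 2, Gf x ω d with hPdef
    have hPH : P = ∏ d ∈ ((n.divisors).erase 1).erase 2, H d := by
      refine Finset.prod_congr rfl fun d hd => ?_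
      rw [Finset.mem_erase, Finset.mem_erase] at hd
      rw [Gf, if_neg hd.2.1, if_neg hd.1, hHdef]
    have eG : ∏ d ∈ n.divisors, Gf x ω d = Gf x ω 1 * (Gf x ω 2 * P) := by
      rw [hPdef, Finset.mul_prod_erase _ _ h2mem, Finset.mul_prod_erase _ _ h1mem]
    have eH : ∏ d ∈ n.divisors, H d = H 1 * (H 2 * P) := by
      rw [hPH, Finset.mul_prod_erase _ _ h2mem, Finset.mul_prod_erase _ _ h1mem]
    rw [eH, hH1, hH2, Even.neg_one_pow he] at hprodH
    rw [eG, Gf, if_pos rfl, Gf, if_neg (by norm_num), if_pos rfl]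
    -- hprodH : -(ω^2+1)/ω * (-x * P) * ω ^ n = 1 * ω ^ n * ((ω - β) * F)
    have hβval : ω - β = (ω ^ 2 + 1) / ω := by rw [hβdef]; field_simp; ring
    rw [hβval] at hprodH
    have := mul_right_cancel₀ hωpne
      (by linear_combination hprodH :
        ((ω ^ 2 + 1) / ω * (x * P)) * ω ^ n = ((ω ^ 2 + 1) / ω * F) * ω ^ n)
    have := mul_left_cancel₀ hcne this
    linarith [this]
  · -- n odd
    set P : ℝ := ∏ d ∈ (n.divisors).erase 1, Gf x ω d with hPdef
    have hPH : P = ∏ d ∈ (n.divisors).erase 1, H d := by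
      refine Finset.prod_congr rfl fun d hd => ?_
      rw [Finset.mem_erase] at hd
      have hd2 : d ≠ 2 := by
        rintro rfl
        have := (Nat.mem_divisors.mp hd.2).1
        exact (Nat.not_even_iff_odd.mpr ho) ((even_iff_two_dvd).mpr this)
      rw [Gf, if_neg hd.1, if_neg hd2, hHdef]
    have eG : ∏ d ∈ n.divisors, Gf x ω d = Gf x ω 1 * P := by
      rw [hPdef, Finset.mul_prod_erase _ _ h1mem]
    have eH : ∏ d ∈ n.divisors, H d = H 1 * P := by
      rw [hPH, Finset.mul_prod_erase _ _ h1mem]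
    rw [eH, hH1, Odd.neg_one_pow ho] at hprodH
    rw [eG, Gf, if_pos rfl]
    have hβval : ω - β = (ω ^ 2 + 1) / ω := by rw [hβdef]; field_simp; ring
    rw [hβval] at hprodH
    have := mul_right_cancel₀ hωpne
      (by linear_combination -hprodH :
        ((ω ^ 2 + 1) / ω * P) * ω ^ n = ((ω ^ 2 + 1) / ω * F) * ω ^ n)
    have := mul_left_cancel₀ hcne this
    linarith [this]

lemma Gf_ne_zero (x ω : ℝ) (hx : 0 < x) (hω0 : 0 < ω) (d : ℕ) (hd : 1 ≤ d) :
    Gf x ω d ≠ 0 := by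
  rw [Gf]
  split_ifs with h1 h2
  · norm_num
  · exact ne_of_gt hx
  · have hd3 : 2 < d := by omega
    have := cyclotomic_pos hd3 (-(ω ^ 2))
    positivity

lemma psi_eq (Ψ : ℕ → Polynomial ℤ)
    (hΨprod : ∀ n, 1 ≤ n → fibPoly n = ∏ d ∈ n.divisors, Ψ d)
    (x ω : ℝ) (hx : 0 < x) (hω0 : 0 < ω) (hω2 : ω ^ 2 = x * ω + 1) :
    ∀ n, 1 ≤ n → (aeval x (Ψ n) : ℝ) = Gf x ω n := by
  intro n
  induction n using Nat.strong_induction_on with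
  | _ n ih =>
    intro hn
    have hF : (aeval x (fibPoly n) : ℝ) = ∏ d ∈ n.divisors, (aeval x (Ψ d) : ℝ) := by
      rw [hΨprod n hn, map_prod]
    have hG := prodG x ω hx hω0 hω2 n hn
    rw [← Nat.cons_self_properDivisors (by omega : n ≠ 0), Finset.prod_cons] at hF hG
    have hprop : ∏ d ∈ n.properDivisors, (aeval x (Ψ d) : ℝ)
        = ∏ d ∈ n.properDivisors, Gf x ω d := by
      refine Finset.prod_congr rfl fun d hd => ?_
      have hd' := Nat.mem_properDivisors.mp hd
      exact ih d hd'.2 (Nat.pos_of_dvd_of_pos hd'.1 (by omega))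
    have hne : ∏ d ∈ n.properDivisors, Gf x ω d ≠ 0 :=
      Finset.prod_ne_zero_iff.mpr fun d hd =>
        Gf_ne_zero x ω hx hω0 d
          (Nat.pos_of_dvd_of_pos (Nat.mem_properDivisors.mp hd).1 (by omega))
    rw [hprop] at hF
    rw [hF] at hG
    exact mul_right_cancel₀ hne hG.symm

theorem fibotomic_eq_cyclotomic
    (Ψ : ℕ → Polynomial ℤ) (hΨ1 : Ψ 1 = 1)
    (hΨmonic : ∀ n, 1 ≤ n → (Ψ n).Monic)
    (hΨprod : ∀ n, 1 ≤ n → fibPoly n = ∏ d ∈ n.divisors, Ψ d) :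
    (∀ n : ℕ, 3 ≤ n → ∀ x : ℝ, 0 < x → ∀ ω : ℝ,
      ω = (x + Real.sqrt (x ^ 2 + 4)) / 2 →
      (Polynomial.aeval x (Ψ n) : ℝ) =
        (Polynomial.cyclotomic n ℝ).eval (-(ω ^ 2)) / ω ^ Nat.totient n) ∧
    (∀ x : ℝ, 0 < x → ∀ ω : ℝ,
      ω = (x + Real.sqrt (x ^ 2 + 4)) / 2 →
      (Polynomial.aeval x (Ψ 2) : ℝ) =
        -((Polynomial.cyclotomic 2 ℝ).eval (-(ω ^ 2))) / ω) := by
  have main : ∀ x : ℝ, 0 < x → ∀ ω : ℝ, ω = (x + Real.sqrt (x ^ 2 + 4)) / 2 →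
      0 < ω ∧ ω ^ 2 = x * ω + 1 := by
    intro x hx ω hωdef
    have hs : Real.sqrt (x ^ 2 + 4) ^ 2 = x ^ 2 + 4 := Real.sq_sqrt (by positivity)
    have hs0 : 0 ≤ Real.sqrt (x ^ 2 + 4) := Real.sqrt_nonneg _
    constructor
    · rw [hωdef]; linarith
    · rw [hωdef]; field_simp; linear_combination hs
  constructor
  · intro n hn x hx ω hωdef
    obtain ⟨hω0, hω2⟩ := main x hx ω hωdef
    rw [psi_eq Ψ hΨprod x ω hx hω0 hω2 n (by omega), Gf,
      if_neg (by omega), if_neg (by omega)]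
  · intro x hx ω hωdef
    obtain ⟨hω0, hω2⟩ := main x hx ω hωdef
    have hωne : ω ≠ 0 := ne_of_gt hω0
    rw [psi_eq Ψ hΨprod x ω hx hω0 hω2 2 (by omega), Gf,
      if_neg (by norm_num), if_pos rfl, cyclotomic_two]
    simp only [eval_add, eval_X, eval_one]
    field_simp
    linear_combination -hω2
end

section
/- For every integer n ≥ 2, Ψ_n(x) = ∏_{1≤s≤n, gcd(s,n)=1} (x − 2i·cos(πs/n)), i.e., the roots of the n-th fibotomic polynomial are exactly 2i·cos(πs/n) for 1 ≤ s ≤ n with gcd(s,n)=1. -/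
open Polynomial

/-- The intended roots: `2 i cos (π s / n)`. -/
noncomputable def rt (n s : ℕ) : ℂ := 2 * Complex.I * Complex.cos (Real.pi * s / n)

/-- The intended factorization of the fibotomic polynomial over `ℂ`. -/
noncomputable def Hd (d : ℕ) : Polynomial ℂ :=
  ∏ t ∈ (Finset.Ico 1 d).filter (fun t => Nat.gcd t d = 1), (X - C (rt d t))

lemma fib_aux : ∀ n : ℕ, (fibPoly (n+1)).Monic ∧ (fibPoly (n+1)).natDegree = n := by
  intro n
  induction n using Nat.strong_induction_on with
  | _ n ih =>
    match n with
    | 0 => simp [fibPoly, monic_one]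
    | 1 => show (X * fibPoly 1 + fibPoly 0).Monic ∧ _
           simp [fibPoly, monic_X]
    | m+2 =>
      obtain ⟨h1, h2⟩ := ih (m+1) (by omega)
      obtain ⟨h3, h4⟩ := ih m (by omega)
      have hmon : (X * fibPoly (m+2)).Monic := (monic_X).mul h1
      have hdegX : (X * fibPoly (m+2)).natDegree = m + 2 := by
        rw [natDegree_mul (X_ne_zero) h1.ne_zero, natDegree_X, h2]; omega
      have hlt : (fibPoly (m+1)).degree < (X * fibPoly (m+2)).degree := by
        rw [degree_eq_natDegree h3.ne_zero, degree_eq_natDegree hmon.ne_zero, hdegX, h4]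
        exact_mod_cast by omega
      refine ⟨hmon.add_of_left hlt, ?_⟩
      show (X * fibPoly (m+2) + fibPoly (m+1)).natDegree = m + 2
      rw [natDegree_add_eq_left_of_degree_lt hlt, hdegX]

lemma fib_eval (c d : ℂ) (h : c * d = -1) : ∀ n : ℕ,
    (c - d) * ((fibPoly n).map (Int.castRingHom ℂ)).eval (c + d) = c ^ n - d ^ n := by
  have key : ∀ n : ℕ,
      (c - d) * ((fibPoly n).map (Int.castRingHom ℂ)).eval (c + d) = c ^ n - d ^ n ∧
      (c - d) * ((fibPoly (n+1)).map (Int.castRingHom ℂ)).eval (c + d) = c ^ (n+1) - d ^ (n+1) := by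
    intro n
    induction n with
    | zero => constructor <;> simp [fibPoly]
    | succ m ihm =>
      obtain ⟨e1, e2⟩ := ihm
      refine ⟨e2, ?_⟩
      show (c - d) * ((X * fibPoly (m+1) + fibPoly m).map (Int.castRingHom ℂ)).eval (c + d) = _
      rw [Polynomial.map_add, Polynomial.map_mul, map_X, eval_add, eval_mul, eval_X]
      linear_combination (c + d) * e2 + e1 + (c ^ m - d ^ m) * h
  exact fun n => (key n).1

lemma fib_root (n s : ℕ) (hs1 : 1 ≤ s) (hs2 : s < n) :
    ((fibPoly n).map (Int.castRingHom ℂ)).eval (rt n s) = 0 := by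
  have hn : 0 < n := by omega
  set θ : ℝ := Real.pi * s / n with hθ
  set c : ℂ := Complex.I * Complex.exp (θ * Complex.I) with hc
  set d : ℂ := Complex.I * Complex.exp (-θ * Complex.I) with hd
  have hcd : c * d = -1 := by
    rw [hc, hd]
    rw [show Complex.I * Complex.exp (θ * Complex.I) * (Complex.I * Complex.exp (-θ * Complex.I))
      = Complex.I ^ 2 * (Complex.exp (θ * Complex.I) * Complex.exp (-θ * Complex.I)) by ring,
      ← Complex.exp_add, Complex.I_sq]
    simp
  have hsum : c + d = rt n s := by
    have : (↑Real.pi * (s:ℂ) / (n:ℂ)) = ((θ : ℝ) : ℂ) := by push_cast [hθ]; ring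
    rw [hc, hd, Complex.exp_mul_I, show (-(θ:ℂ)) * Complex.I = ((-θ : ℝ):ℂ) * Complex.I by push_cast; ring,
      Complex.exp_mul_I, rt, this]
    push_cast
    rw [Complex.cos_neg, Complex.sin_neg]
    ring
  have hdiff : c - d ≠ 0 := by
    have hsin : Real.sin θ > 0 := by
      apply Real.sin_pos_of_pos_of_lt_pi
      · apply div_pos (by positivity) (by exact_mod_cast hn)
      · rw [hθ, div_lt_iff₀ (by exact_mod_cast hn)]
        have : (s:ℝ) < n := by exact_mod_cast hs2
        nlinarith [Real.pi_pos]
    rw [hc, hd, Complex.exp_mul_I, show (-(θ:ℂ)) * Complex.I = ((-θ : ℝ):ℂ) * Complex.I by push_cast; ring,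
      Complex.exp_mul_I]
    push_cast
    rw [Complex.cos_neg, Complex.sin_neg]
    rw [show Complex.I * (Complex.cos θ + Complex.sin θ * Complex.I)
        - Complex.I * (Complex.cos θ + -Complex.sin θ * Complex.I)
        = Complex.I ^ 2 * (2 * Complex.sin θ) by ring, Complex.I_sq]
    rw [← Complex.ofReal_sin]
    intro hcon
    have h2 : (2 * Real.sin θ : ℝ) = 0 := by
      have := hcon
      field_simp at this
      have h' : -(2 * Real.sin θ) = 0 := by exact_mod_cast this
      linarith
    linarith
  have hpow : c ^ n - d ^ n = 0 := by
    have hnθ : (n : ℝ) * θ = Real.pi * s := by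
      rw [hθ]; field_simp
    have h1 : Complex.exp (θ * Complex.I) ^ n = (-1 : ℂ) ^ s := by
      rw [← Complex.exp_nat_mul]
      rw [show (n:ℂ) * ((θ:ℝ) * Complex.I) = ((n * θ : ℝ):ℂ) * Complex.I by push_cast; ring, hnθ]
      rw [show ((Real.pi * s : ℝ):ℂ) * Complex.I = (s:ℂ) * (Real.pi * Complex.I) by push_cast; ring]
      rw [Complex.exp_nat_mul, Complex.exp_pi_mul_I]
    have h2 : Complex.exp (-θ * Complex.I) ^ n = (-1 : ℂ) ^ s := by
      rw [← Complex.exp_nat_mul]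
      rw [show (n:ℂ) * (-(θ:ℝ) * Complex.I) = -(((n * θ : ℝ):ℂ) * Complex.I) by push_cast; ring, hnθ]
      rw [Complex.exp_neg]
      rw [show ((Real.pi * s : ℝ):ℂ) * Complex.I = (s:ℂ) * (Real.pi * Complex.I) by push_cast; ring]
      rw [Complex.exp_nat_mul, Complex.exp_pi_mul_I, ← inv_pow, inv_neg, inv_one]
    rw [hc, hd, mul_pow, mul_pow, h1, h2]
    ring
  have := fib_eval c d hcd n
  rw [hsum, hpow] at this
  exact (mul_eq_zero.mp this).resolve_left hdiff

lemma rt_injOn (n : ℕ) : Set.InjOn (rt n) (Finset.Ico 1 n) := by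
  intro a ha b hb hab
  simp only [Finset.coe_Ico, Set.mem_Ico] at ha hb
  have hn : (0:ℝ) < n := by exact_mod_cast by omega
  have key : ∀ s : ℕ, 1 ≤ s → s < n → (↑Real.pi * (s:ℂ) / (n:ℂ)) = ((Real.pi * s / n : ℝ) : ℂ) := by
    intro s _ _; push_cast; ring
  have harg : ∀ s : ℕ, 1 ≤ s → s < n → Real.pi * s / n ∈ Set.Icc 0 Real.pi := by
    intro s h1 h2
    constructor
    · positivity
    · rw [div_le_iff₀ hn]
      have : (s:ℝ) ≤ n := by exact_mod_cast h2.le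
      nlinarith [Real.pi_pos]
  have h1 : Complex.cos ((Real.pi * a / n : ℝ) : ℂ) = Complex.cos ((Real.pi * b / n : ℝ) : ℂ) := by
    have := hab
    unfold rt at this
    rw [key a ha.1 ha.2, key b hb.1 hb.2] at this
    exact mul_left_cancel₀ (by simp [Complex.I_ne_zero] : (2 * Complex.I : ℂ) ≠ 0) this
  rw [← Complex.ofReal_cos, ← Complex.ofReal_cos, Complex.ofReal_inj] at h1
  have := Real.injOn_cos (harg a ha.1 ha.2) (harg b hb.1 hb.2) h1
  have hπ := Real.pi_pos
  field_simp at this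
  exact_mod_cast (by linarith : (a:ℝ) = b)

lemma P1 (n : ℕ) (hn : 1 ≤ n) :
    (fibPoly n).map (Int.castRingHom ℂ) = ∏ s ∈ Finset.Ico 1 n, (X - C (rt n s)) := by
  obtain ⟨m, rfl⟩ : ∃ m, n = m + 1 := ⟨n - 1, by omega⟩
  obtain ⟨hmon, hdeg⟩ := fib_aux m
  have hpmon : ((fibPoly (m+1)).map (Int.castRingHom ℂ)).Monic := hmon.map _
  have hpdeg : ((fibPoly (m+1)).map (Int.castRingHom ℂ)).natDegree = m := by
    rw [hmon.natDegree_map, hdeg]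
  have hqmon : (∏ s ∈ Finset.Ico 1 (m+1), (X - C (rt (m+1) s))).Monic :=
    monic_prod_of_monic _ _ (fun s _ => monic_X_sub_C _)
  have hqdeg : (∏ s ∈ Finset.Ico 1 (m+1), (X - C (rt (m+1) s))).natDegree = m := by
    rw [natDegree_prod _ _ (fun s _ => X_sub_C_ne_zero _)]
    simp [natDegree_X_sub_C]
  have hdvd : (∏ s ∈ Finset.Ico 1 (m+1), (X - C (rt (m+1) s))) ∣
      (fibPoly (m+1)).map (Int.castRingHom ℂ) := by
    apply Finset.prod_dvd_of_coprime
    · intro a ha b hb hab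
      exact isCoprime_X_sub_C_of_isUnit_sub
        ((sub_ne_zero.mpr ((rt_injOn (m+1)).ne ha hb hab)).isUnit)
    · intro s hs
      rw [Finset.mem_Ico] at hs
      exact dvd_iff_isRoot.mpr (fib_root (m+1) s hs.1 hs.2)
  exact (eq_of_monic_of_dvd_of_natDegree_le hqmon hpmon hdvd (by rw [hpdeg, hqdeg]))

lemma rt_reduce (n a : ℕ) (hn : 1 ≤ n) (ha : 1 ≤ a) :
    rt n a = rt (n / Nat.gcd a n) (a / Nat.gcd a n) := by
  set g := Nat.gcd a n with hg
  have hg0 : 0 < g := Nat.gcd_pos_of_pos_left _ (by omega)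
  have hga : g ∣ a := Nat.gcd_dvd_left _ _
  have hgn : g ∣ n := Nat.gcd_dvd_right _ _
  unfold rt
  have h1 : ((a / g : ℕ) : ℂ) * g = a := by
    exact_mod_cast congrArg (Nat.cast (R := ℂ)) (Nat.div_mul_cancel hga)
  have h2 : ((n / g : ℕ) : ℂ) * g = n := by
    exact_mod_cast congrArg (Nat.cast (R := ℂ)) (Nat.div_mul_cancel hgn)
  have hn0 : (n : ℂ) ≠ 0 := by exact_mod_cast by omega
  have hng0 : ((n / g : ℕ) : ℂ) ≠ 0 := by
    have : 0 < n / g := Nat.div_pos (Nat.le_of_dvd (by omega) hgn) hg0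
    exact_mod_cast by omega
  have hgc : (g : ℂ) ≠ 0 := by exact_mod_cast by omega
  have harg : (↑Real.pi * (a:ℂ) / (n:ℂ)) = ↑Real.pi * ((a / g : ℕ):ℂ) / ((n / g : ℕ):ℂ) := by
    field_simp
    rw [← h1, ← h2]; ring
  rw [harg]

lemma P2 (n : ℕ) (hn : 1 ≤ n) :
    ∏ s ∈ Finset.Ico 1 n, (X - C (rt n s)) = ∏ d ∈ n.divisors, Hd d := by
  rw [← Finset.prod_fiberwise_of_maps_to (g := fun a => n / Nat.gcd a n) (t := n.divisors) ?_]
  · apply Finset.prod_congr rfl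
    intro d hd
    have hne : n ≠ 0 := by omega
    rw [Nat.mem_divisors] at hd
    obtain ⟨hdvd, -⟩ := hd
    obtain ⟨e, hne'⟩ := hdvd
    have hd0 : 0 < d := by
      rcases Nat.eq_zero_or_pos d with h | h
      · subst h; simp at hne'; omega
      · exact h
    have he0 : 0 < e := by
      rcases Nat.eq_zero_or_pos e with h | h
      · subst h; simp at hne'; omega
      · exact h
    rw [Hd]
    apply Finset.prod_nbij' (i := fun a => a / Nat.gcd a n) (j := fun t => t * e)
    · intro a ha
      simp only [Finset.mem_filter, Finset.mem_Ico] at ha ⊢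
      obtain ⟨⟨ha1, ha2⟩, hfib⟩ := ha
      have hg0 : 0 < Nat.gcd a n := Nat.gcd_pos_of_pos_left _ (by omega)
      refine ⟨⟨Nat.div_pos (Nat.le_of_dvd (by omega) (Nat.gcd_dvd_left a n)) hg0, ?_⟩, ?_⟩
      · rw [← hfib]
        exact Nat.div_lt_div_of_lt_of_dvd (Nat.gcd_dvd_right a n) ha2
      · have := Nat.coprime_div_gcd_div_gcd (m := a) (n := n) hg0
        rwa [hfib] at this
    · intro t ht
      simp only [Finset.mem_filter, Finset.mem_Ico] at ht ⊢
      obtain ⟨⟨ht1, ht2⟩, hcop⟩ := ht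
      have hgte : Nat.gcd (t * e) n = e := by
        rw [hne', Nat.gcd_mul_right, hcop, one_mul]
      refine ⟨⟨Nat.mul_pos ht1 he0, ?_⟩, ?_⟩
      · rw [hne']; exact (Nat.mul_lt_mul_right he0).mpr ht2
      · rw [hgte, hne', Nat.mul_div_cancel _ he0]
    · intro a ha
      simp only [Finset.mem_filter, Finset.mem_Ico] at ha
      obtain ⟨⟨ha1, ha2⟩, hfib⟩ := ha
      have hge : Nat.gcd a n = e := by
        have h1 : n / (n / Nat.gcd a n) = Nat.gcd a n :=
          Nat.div_div_self (Nat.gcd_dvd_right a n) (by omega)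
        rw [hfib] at h1
        rw [← h1, hne', Nat.mul_div_cancel_left _ hd0]
      have hdvd2 : e ∣ a := hge ▸ Nat.gcd_dvd_left a n
      rw [hge]
      exact Nat.div_mul_cancel hdvd2
    · intro t ht
      simp only [Finset.mem_filter, Finset.mem_Ico] at ht
      obtain ⟨⟨ht1, ht2⟩, hcop⟩ := ht
      have hgte : Nat.gcd (t * e) n = e := by
        rw [hne', Nat.gcd_mul_right, hcop, one_mul]
      rw [hgte, Nat.mul_div_cancel _ he0]
    · intro a ha
      simp only [Finset.mem_filter, Finset.mem_Ico] at ha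
      obtain ⟨⟨ha1, ha2⟩, hfib⟩ := ha
      rw [rt_reduce n a hn ha1, hfib]
  · intro a ha
    rw [Finset.mem_Ico] at ha
    rw [Nat.mem_divisors]
    exact ⟨Nat.div_dvd_of_dvd (Nat.gcd_dvd_right _ _), by omega⟩

theorem fibotomic_roots
    (Ψ : ℕ → Polynomial ℤ) (hΨ1 : Ψ 1 = 1)
    (hΨmonic : ∀ n, 1 ≤ n → (Ψ n).Monic)
    (hΨprod : ∀ n, 1 ≤ n → fibPoly n = ∏ d ∈ n.divisors, Ψ d)
    (n : ℕ) (hn : 2 ≤ n) :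
    (Ψ n).map (Int.castRingHom ℂ) =
      ∏ s ∈ (Finset.Icc 1 n).filter (fun s => Nat.gcd s n = 1),
        (X - C (2 * Complex.I * Complex.cos (Real.pi * s / n))) := by
  -- first, the key claim by strong induction
  have main : ∀ m : ℕ, 1 ≤ m → (Ψ m).map (Int.castRingHom ℂ) = Hd m := by
    intro m
    induction m using Nat.strong_induction_on with
    | _ m ih =>
      intro hm
      have hprod : (fibPoly m).map (Int.castRingHom ℂ) = ∏ d ∈ m.divisors, (Ψ d).map (Int.castRingHom ℂ) := by
        rw [hΨprod m hm, Polynomial.map_prod]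
      have hH : (fibPoly m).map (Int.castRingHom ℂ) = ∏ d ∈ m.divisors, Hd d := by
        rw [P1 m hm, P2 m hm]
      have hins : insert m m.properDivisors = m.divisors :=
        Nat.insert_self_properDivisors (by omega)
      have hnotmem : m ∉ m.properDivisors := Nat.self_notMem_properDivisors
      have hprop : ∀ d ∈ m.properDivisors, (Ψ d).map (Int.castRingHom ℂ) = Hd d := by
        intro d hd
        rw [Nat.mem_properDivisors] at hd
        exact ih d hd.2 (Nat.pos_of_dvd_of_pos hd.1 (by omega))
      have heq : (Ψ m).map (Int.castRingHom ℂ) * ∏ d ∈ m.properDivisors, Hd d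
          = Hd m * ∏ d ∈ m.properDivisors, Hd d := by
        have e1 := hprod
        rw [← hins, Finset.prod_insert hnotmem, Finset.prod_congr rfl hprop] at e1
        have e2 := hH
        rw [← hins, Finset.prod_insert hnotmem] at e2
        rw [← e1, ← e2]
      have hne : (∏ d ∈ m.properDivisors, Hd d) ≠ 0 := by
        apply (monic_prod_of_monic _ _ ?_).ne_zero
        intro d hd
        exact monic_prod_of_monic _ _ (fun t _ => monic_X_sub_C _)
      exact mul_right_cancel₀ hne heq
  rw [main n (by omega), Hd]
  apply Finset.prod_congr
  · ext s
    simp only [Finset.mem_filter, Finset.mem_Ico, Finset.mem_Icc]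
    constructor
    · rintro ⟨⟨h1, h2⟩, h3⟩
      exact ⟨⟨h1, by omega⟩, h3⟩
    · rintro ⟨⟨h1, h2⟩, h3⟩
      refine ⟨⟨h1, ?_⟩, h3⟩
      rcases Nat.lt_or_ge s n with h | h
      · exact h
      · exfalso
        have : s = n := by omega
        subst this
        rw [Nat.gcd_self] at h3
        omega
  · intro s _
    rw [rt]
end

section
/- The constant term of the n-th fibotomic polynomial satisfies: Ψ_2(0)=0; Ψ_n(0)=p if n = 2p^α for some prime p and positive integer α; and Ψ_n(0)=1 otherwise (for n ≥ 1, n ≠ 2, n not of the form 2p^α). -/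
open Polynomial Finset

/-- Product of `minFac` over prime-power divisors equals the number. -/
lemma prod_minFac_primePow_divisors : ∀ m : ℕ, m ≠ 0 →
    ∏ q ∈ m.divisors.filter IsPrimePow, q.minFac = m := by
  intro m
  induction m using Nat.recOnPosPrimePosCoprime with
  | prime_pow p k hp hk =>
      intro _
      have hpn : p.Prime := hp
      rw [Nat.divisors_prime_pow hpn]
      rw [Finset.filter_map, Finset.prod_map]
      have : Finset.filter (IsPrimePow ∘ (p ^ ·)) (Finset.range (k+1)) =
          Finset.Ioc 0 k := by
        ext j
        simp only [Finset.mem_filter, Finset.mem_range, Function.comp_apply,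
          Finset.mem_Ioc, Nat.lt_succ_iff]
        constructor
        · rintro ⟨hj, hpp⟩
          refine ⟨?_, hj⟩
          rcases Nat.eq_zero_or_pos j with rfl | h
          · exact absurd (by simpa using hpp) not_isPrimePow_one
          · exact h
        · rintro ⟨h0, hj⟩
          exact ⟨hj, ⟨p, j, hp.prime, h0, rfl⟩⟩
      simp only [Function.Embedding.coeFn_mk] at *
      rw [this]
      rw [Finset.prod_congr rfl (fun j hj => Nat.Prime.pow_minFac hpn (by simp [Finset.mem_Ioc] at hj; omega))]
      simp [Nat.card_Ioc]
  | zero => intro h; simp at h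
  | one => intro _; rw [Nat.divisors_one, Finset.filter_singleton, if_neg not_isPrimePow_one]; rfl
  | coprime a b ha hb hab iha ihb =>
      intro _
      rw [Nat.mul_divisors_filter_prime_pow hab, Finset.filter_union,
        Finset.prod_union (Nat.disjoint_divisors_filter_isPrimePow hab),
        iha (by omega), ihb (by omega)]

/-- The target constant-term function. -/
def gval (n : ℕ) : ℤ :=
  if n = 2 then 0 else if 2 ∣ n ∧ IsPrimePow (n / 2) then ((n / 2).minFac : ℤ) else 1

lemma gval_odd {n : ℕ} (h : ¬ 2 ∣ n) : gval n = 1 := by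
  rw [gval, if_neg (by rintro rfl; exact h ⟨1, rfl⟩), if_neg (by tauto)]

lemma gval_one_le {n : ℕ} (h : n ≠ 2) : 1 ≤ gval n := by
  rw [gval, if_neg h]
  split
  · exact_mod_cast Nat.minFac_pos _
  · exact le_refl _

lemma gval_two_mul {q : ℕ} (hq : IsPrimePow q) : gval (2 * q) = ((q.minFac : ℤ)) := by
  have h2 : 2 ≤ q := hq.two_le
  rw [gval, if_neg (by omega), if_pos ⟨⟨q, rfl⟩, by rw [Nat.mul_div_cancel_left _ two_pos]; exact hq⟩,
    Nat.mul_div_cancel_left _ two_pos]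

/-- Key arithmetic identity. -/
lemma prod_gval_erase_two (m : ℕ) (hm : m ≠ 0) :
    ∏ d ∈ ((2 * m).divisors.erase 2), gval d = (m : ℤ) := by
  have hS : ∀ S : Finset ℕ, S = (m.divisors.filter IsPrimePow).image (fun q => 2 * q) →
      True := fun _ _ => trivial
  set S : Finset ℕ := (m.divisors.filter IsPrimePow).image (fun q => 2 * q) with hSdef
  have hsub : S ⊆ (2 * m).divisors.erase 2 := by
    intro d hd
    simp only [hSdef, Finset.mem_image, Finset.mem_filter, Nat.mem_divisors] at hd
    obtain ⟨q, ⟨⟨hq, -⟩, hpp⟩, rfl⟩ := hd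
    have h2 : 2 ≤ q := hpp.two_le
    exact Finset.mem_erase.mpr ⟨by omega, Nat.mem_divisors.mpr ⟨mul_dvd_mul_left 2 hq, by positivity⟩⟩
  have hout : ∀ d ∈ (2 * m).divisors.erase 2, d ∉ S → gval d = 1 := by
    intro d hd hdS
    rw [Finset.mem_erase, Nat.mem_divisors] at hd
    rw [gval, if_neg hd.1]
    split
    case isTrue h =>
      exfalso
      obtain ⟨⟨q, rfl⟩, hpp⟩ := h
      rw [Nat.mul_div_cancel_left _ two_pos] at hpp
      refine hdS ?_
      simp only [hSdef, Finset.mem_image, Finset.mem_filter, Nat.mem_divisors]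
      exact ⟨q, ⟨⟨(Nat.mul_dvd_mul_iff_left two_pos).mp hd.2.1, hm⟩, hpp⟩, rfl⟩
    case isFalse h => rfl
  rw [← Finset.prod_subset hsub hout, hSdef,
    Finset.prod_image (fun a _ b _ h => by omega)]
  rw [Finset.prod_congr rfl (fun q hq => gval_two_mul (Finset.mem_filter.mp hq).2)]
  rw [← Nat.cast_prod, prod_minFac_primePow_divisors m hm]

lemma fibPoly_eval_zero (n : ℕ) : (fibPoly n).eval 0 = if n % 2 = 1 then 1 else 0 := by
  induction n using Nat.twoStepInduction with
  | zero => simp [fibPoly]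
  | one => simp [fibPoly]
  | more n ih _ =>
    show (X * fibPoly (n + 1) + fibPoly n).eval 0 = _
    rw [eval_add, eval_mul, eval_X, zero_mul, zero_add, ih, Nat.add_mod_right]

lemma fibPoly_coeff_one_even (m : ℕ) : (fibPoly (2 * m)).coeff 1 = (m : ℤ) := by
  induction m with
  | zero => simp [fibPoly]
  | succ k ih =>
    have h : 2 * (k + 1) = 2 * k + 2 := by ring
    rw [h]
    show (X * fibPoly (2 * k + 1) + fibPoly (2 * k)).coeff 1 = _
    rw [coeff_add, show (1 : ℕ) = 0 + 1 from rfl, coeff_X_mul, ih,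
      coeff_zero_eq_eval_zero, fibPoly_eval_zero]
    have : (2 * k + 1) % 2 = 1 := by omega
    rw [this]
    push_cast
    ring

theorem fibotomic_constant_term
    (Ψ : ℕ → Polynomial ℤ) (hΨ1 : Ψ 1 = 1)
    (hΨmonic : ∀ n, 1 ≤ n → (Ψ n).Monic)
    (hΨprod : ∀ n, 1 ≤ n → fibPoly n = ∏ d ∈ n.divisors, Ψ d) :
    (Ψ 2).eval 0 = 0 ∧
    (∀ n p α : ℕ, p.Prime → 0 < α → n = 2 * p ^ α → (Ψ n).eval 0 = p) ∧
    (∀ n : ℕ, 1 ≤ n → n ≠ 2 → (¬∃ p α : ℕ, p.Prime ∧ 0 < α ∧ n = 2 * p ^ α) →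
      (Ψ n).eval 0 = 1) := by
  have hpsi2 : Ψ 2 = X := by
    have h := hΨprod 2 (by norm_num)
    rw [Nat.Prime.divisors Nat.prime_two] at h
    rw [show fibPoly 2 = X * 1 + 0 from rfl] at h
    rw [Finset.prod_insert (by norm_num), Finset.prod_singleton, hΨ1, one_mul] at h
    rw [← h]; ring
  have key : ∀ n, 1 ≤ n → (Ψ n).eval 0 = gval n := by
    intro n
    induction n using Nat.strong_induction_on with
    | _ n ih =>
    intro hn
    rcases eq_or_ne n 2 with rfl | hn2
    · rw [hpsi2, gval]; simp
    by_cases h2 : 2 ∣ n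
    · obtain ⟨m, rfl⟩ := h2
      have hm : 2 ≤ m := by omega
      have h2mem : 2 ∈ (2 * m).divisors :=
        Nat.mem_divisors.mpr ⟨⟨m, rfl⟩, by omega⟩
      have hprod := hΨprod (2 * m) hn
      rw [← Finset.mul_prod_erase _ _ h2mem, hpsi2] at hprod
      have hR : ∏ d ∈ ((2 * m).divisors.erase 2), (Ψ d).eval 0 = (m : ℤ) := by
        have hc := congrArg (fun p : Polynomial ℤ => p.coeff 1) hprod
        simp only [fibPoly_coeff_one_even] at hc
        rw [show (1 : ℕ) = 0 + 1 from rfl, coeff_X_mul, coeff_zero_eq_eval_zero,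
          eval_prod] at hc
        exact hc.symm
      have hnmem : 2 * m ∈ (2 * m).divisors.erase 2 :=
        Finset.mem_erase.mpr ⟨by omega, Nat.mem_divisors_self _ (by omega)⟩
      rw [← Finset.mul_prod_erase _ _ hnmem] at hR
      have hgprod := prod_gval_erase_two m (by omega)
      rw [← Finset.mul_prod_erase _ _ hnmem] at hgprod
      have hT : ∏ d ∈ (((2 * m).divisors.erase 2).erase (2 * m)), (Ψ d).eval 0
          = ∏ d ∈ (((2 * m).divisors.erase 2).erase (2 * m)), gval d := by
        refine Finset.prod_congr rfl fun d hd => ?_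
        have hd1 := Finset.mem_erase.mp hd
        have hd2 := Finset.mem_erase.mp hd1.2
        have hdvd := Nat.mem_divisors.mp hd2.2
        have hdlt : d < 2 * m := lt_of_le_of_ne (Nat.le_of_dvd (by omega) hdvd.1) hd1.1
        have hdpos : 1 ≤ d := Nat.pos_of_mem_divisors hd2.2
        exact ih d hdlt hdpos
      rw [hT] at hR
      have hTpos : 0 < ∏ d ∈ (((2 * m).divisors.erase 2).erase (2 * m)), gval d := by
        refine Finset.prod_pos fun d hd => ?_
        have hd1 := Finset.mem_erase.mp hd
        have := gval_one_le (Finset.mem_erase.mp hd1.2).1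
        omega
      have := hR.trans hgprod.symm
      exact mul_right_cancel₀ (ne_of_gt hTpos) this
    · have hprod := hΨprod n hn
      have hnmem : n ∈ n.divisors := Nat.mem_divisors_self _ (by omega)
      rw [← Finset.mul_prod_erase _ _ hnmem] at hprod
      have hc := congrArg (fun p : Polynomial ℤ => p.eval 0) hprod
      simp only [fibPoly_eval_zero, eval_mul, eval_prod] at hc
      have hmod : n % 2 = 1 := by omega
      rw [if_pos hmod] at hc
      have hrest : ∏ d ∈ (n.divisors.erase n), (Ψ d).eval 0 = 1 := by
        refine Finset.prod_eq_one fun d hd => ?_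
        have hd1 := Finset.mem_erase.mp hd
        have hdvd := Nat.mem_divisors.mp hd1.2
        have hdlt : d < n := lt_of_le_of_ne (Nat.le_of_dvd (by omega) hdvd.1) hd1.1
        have hdpos : 1 ≤ d := Nat.pos_of_mem_divisors hd1.2
        rw [ih d hdlt hdpos]
        refine gval_odd fun hdd => h2 (hdd.trans hdvd.1)
      rw [hrest, mul_one] at hc
      rw [← hc, gval_odd h2]
  refine ⟨by rw [hpsi2]; simp, ?_, ?_⟩
  · rintro n p α hp hα rfl
    have hpα : 2 ≤ p ^ α := (Nat.one_lt_pow (by omega) hp.one_lt)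
    have hdiv : (2 * p ^ α) / 2 = p ^ α := Nat.mul_div_cancel_left _ two_pos
    have hppow : IsPrimePow (p ^ α) := ⟨p, α, hp.prime, hα, rfl⟩
    rw [key _ (by omega), gval, if_neg (by omega), if_pos ⟨⟨p ^ α, rfl⟩, by rw [hdiv]; exact hppow⟩,
      hdiv, Nat.Prime.pow_minFac hp (by omega)]
  · intro n hn hn2 hnex
    rw [key _ hn, gval, if_neg hn2, if_neg ?_]
    rintro ⟨⟨q, rfl⟩, hpp⟩
    rw [Nat.mul_div_cancel_left _ two_pos] at hpp
    obtain ⟨p, α, hp, hα, rfl⟩ := (isPrimePow_nat_iff _).mp hpp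
    exact hnex ⟨p, α, hp, hα, rfl⟩
end

section
/- Let p be an odd prime and m ≥ 2 an integer with p ∤ m. Then Ψ_{pm}(x) · Ψ_m(x) = Ψ_m(x·Ψ_{2p}(x)) as polynomials in ℤ[x]. -/
open Polynomial

lemma fibPoly_add_two (n : ℕ) : fibPoly (n + 2) = X * fibPoly (n + 1) + fibPoly n := rfl

lemma fibPoly_zero : fibPoly 0 = 0 := rfl
lemma fibPoly_one : fibPoly 1 = 1 := rfl
lemma fibPoly_two : fibPoly 2 = X := by
  rw [show (2:ℕ) = 0 + 2 from rfl, fibPoly_add_two, fibPoly_one, fibPoly_zero]; ring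

lemma fibPoly_add (m n : ℕ) :
    fibPoly (m + n + 1) = fibPoly (m + 1) * fibPoly (n + 1) + fibPoly m * fibPoly n := by
  induction m using Nat.twoStepInduction generalizing n with
  | zero => simp [fibPoly_one, fibPoly_zero]
  | one =>
    rw [show 1 + n + 1 = n + 2 from by omega, fibPoly_add_two, fibPoly_two, fibPoly_one]
    ring
  | more m ih ih1 =>
    rw [show m + 2 + 1 = m + 1 + 2 from by omega, fibPoly_add_two (m+1),
      show m + 2 + n + 1 = m + n + 1 + 2 from by omega, fibPoly_add_two,
      show m + n + 1 + 1 = m + 1 + n + 1 from by omega, ih1 n, ih n, fibPoly_add_two m]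
    ring

lemma fibPoly_docagne (p n : ℕ) :
    fibPoly (p+1) * fibPoly (n+p) - fibPoly p * fibPoly (n+p+1) = (-1)^p * fibPoly n := by
  induction p with
  | zero => simp [fibPoly_one, fibPoly_zero]
  | succ p ih =>
    rw [show p+1+1 = p+2 from rfl, fibPoly_add_two p,
      show n+(p+1) = n+p+1 from by omega,
      show n+p+1+1 = n+p+2 from rfl, fibPoly_add_two (n+p), pow_succ]
    linear_combination -ih

lemma fibPoly_rec (q n : ℕ) :
    fibPoly (n + 2*q + 2) =
      (fibPoly (q+2) + fibPoly q) * fibPoly (n + q + 1) + (-1)^q * fibPoly n := by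
  have h1 := fibPoly_add q (n + q + 1)
  have h2 := fibPoly_docagne (q+1) n
  rw [show q + (n+q+1) + 1 = n + 2*q + 2 from by omega,
    show n + q + 1 + 1 = n + q + 2 from rfl] at h1
  rw [show n + (q+1) = n + q + 1 from by omega,
    show n + q + 1 + 1 = n + q + 2 from rfl,
    show q + 1 + 1 = q + 2 from rfl, pow_succ] at h2
  linear_combination h1 - h2

lemma fibPoly_mul (q : ℕ) (hq : Even q) (n : ℕ) :
    fibPoly ((q+1) * n) =
      fibPoly (q+1) * (fibPoly n).comp (fibPoly (q+2) + fibPoly q) := by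
  induction n using Nat.twoStepInduction with
  | zero => simp [fibPoly_zero]
  | one => simp [fibPoly_one]
  | more n ih ih1 =>
    have h := fibPoly_rec q ((q+1)*n)
    rw [show (q+1)*n + 2*q + 2 = (q+1)*(n+2) from by ring,
      show (q+1)*n + q + 1 = (q+1)*(n+1) from by ring,
      hq.neg_one_pow, one_mul] at h
    rw [h, ih, ih1, fibPoly_add_two n, add_comp, mul_comp, X_comp]
    ring

lemma fibPoly_mul' (p : ℕ) (hp : Odd p) (n : ℕ) :
    fibPoly (p * n) =
      fibPoly p * (fibPoly n).comp (fibPoly (p+1) + fibPoly (p-1)) := by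
  have hp1 : 1 ≤ p := hp.pos
  obtain ⟨q, rfl⟩ : ∃ q, p = q + 1 := ⟨p - 1, by omega⟩
  simpa using fibPoly_mul q (Nat.not_odd_iff_even.mp (Nat.odd_add_one.mp hp)) n

lemma divisors_prime_mul {p m : ℕ} (hp : p.Prime) (hm : 0 < m) (_hpm : ¬ p ∣ m) :
    (p * m).divisors = m.divisors ∪ m.divisors.image (p * ·) := by
  ext d
  simp only [Nat.mem_divisors, Finset.mem_union, Finset.mem_image]
  constructor
  · rintro ⟨hd, -⟩
    by_cases hpd : p ∣ d
    · obtain ⟨e, rfl⟩ := hpd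
      exact Or.inr ⟨e, ⟨(mul_dvd_mul_iff_left hp.pos.ne').mp hd, hm.ne'⟩, rfl⟩
    · left
      refine ⟨?_, hm.ne'⟩
      exact ((hp.coprime_iff_not_dvd.mpr hpd).symm).dvd_of_dvd_mul_left hd
  · have hne : p * m ≠ 0 := Nat.mul_ne_zero hp.pos.ne' hm.ne'
    rintro (⟨hd, -⟩ | ⟨e, ⟨he, -⟩, rfl⟩)
    · exact ⟨hd.mul_left p, hne⟩
    · exact ⟨mul_dvd_mul_left p he, hne⟩

lemma prod_divisors_prime_mul {M : Type*} [CommMonoid M] (f : ℕ → M) {p m : ℕ}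
    (hp : p.Prime) (hm : 0 < m) (hpm : ¬ p ∣ m) :
    ∏ d ∈ (p * m).divisors, f d =
      (∏ d ∈ m.divisors, f d) * ∏ d ∈ m.divisors, f (p * d) := by
  rw [divisors_prime_mul hp hm hpm, Finset.prod_union, Finset.prod_image]
  · exact fun a _ b _ h => Nat.eq_of_mul_eq_mul_left hp.pos h
  · rw [Finset.disjoint_right]
    rintro d hd hd'
    obtain ⟨e, he, rfl⟩ := Finset.mem_image.mp hd
    exact hpm (dvd_trans ⟨e, rfl⟩ (Nat.mem_divisors.mp hd').1)

lemma fibotomic_key (Ψ : ℕ → Polynomial ℤ) (hΨ1 : Ψ 1 = 1)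
    (hΨmonic : ∀ n, 1 ≤ n → (Ψ n).Monic)
    (hΨprod : ∀ n, 1 ≤ n → fibPoly n = ∏ d ∈ n.divisors, Ψ d)
    (p : ℕ) (hp : p.Prime) (hp2 : p ≠ 2) :
    ∀ m, 2 ≤ m → ¬ p ∣ m →
      Ψ (p * m) * Ψ m = (Ψ m).comp (fibPoly (p+1) + fibPoly (p-1)) := by
  have hΨp : fibPoly p = Ψ p := by
    have h := hΨprod p hp.one_lt.le
    rw [hp.divisors, Finset.prod_pair hp.one_lt.ne, hΨ1, one_mul] at h
    exact h
  have hodd : Odd p := hp.odd_of_ne_two hp2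
  intro m
  induction m using Nat.strong_induction_on with
  | _ m IH =>
  intro hm hpm
  set L : Polynomial ℤ := fibPoly (p+1) + fibPoly (p-1) with hL
  have hm0 : 0 < m := by omega
  have hmain : (∏ d ∈ m.divisors, (Ψ d * Ψ (p * d))) =
      fibPoly p * ∏ d ∈ m.divisors, (Ψ d).comp L := by
    have h1 := hΨprod (p * m) (Nat.one_le_iff_ne_zero.mpr (Nat.mul_ne_zero hp.pos.ne' hm0.ne'))
    rw [prod_divisors_prime_mul Ψ hp hm0 hpm] at h1
    have h2 := fibPoly_mul' p hodd m
    rw [hΨprod m (by omega), Polynomial.prod_comp] at h2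
    rw [h1] at h2
    rw [Finset.prod_mul_distrib]
    exact h2
  have h1m : (1:ℕ) ∈ m.divisors := Nat.one_mem_divisors.mpr hm0.ne'
  have hmm : m ∈ m.divisors := Nat.mem_divisors_self m hm0.ne'
  -- peel off d = 1
  rw [← Finset.mul_prod_erase _ _ h1m, ← Finset.mul_prod_erase _ _ h1m, hΨ1, mul_one p,
    ← hΨp, one_comp] at hmain
  simp only [one_mul] at hmain
  have hfibp : fibPoly p ≠ 0 := by rw [hΨp]; exact (hΨmonic p hp.one_le).ne_zero
  have hmain2 := mul_left_cancel₀ hfibp hmain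
  -- peel off d = m
  have hmT : m ∈ m.divisors.erase 1 := Finset.mem_erase.mpr ⟨by omega, hmm⟩
  rw [← Finset.mul_prod_erase _ _ hmT, ← Finset.mul_prod_erase _ _ hmT] at hmain2
  have hS : ∀ d ∈ (m.divisors.erase 1).erase m, Ψ d * Ψ (p * d) = (Ψ d).comp L := by
    intro d hd
    obtain ⟨hdm, hd1, hdvd⟩ : d ≠ m ∧ d ≠ 1 ∧ d ∣ m := by
      have h1 := Finset.mem_erase.mp hd
      have h2 := Finset.mem_erase.mp h1.2
      exact ⟨h1.1, h2.1, (Nat.mem_divisors.mp h2.2).1⟩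
    have hdlt : d < m := lt_of_le_of_ne (Nat.le_of_dvd hm0 hdvd) hdm
    have hd2 : 2 ≤ d := by
      rcases Nat.pos_of_mem_divisors (Finset.mem_of_mem_erase (Finset.mem_of_mem_erase hd))
        with _; omega
    have := IH d hdlt hd2 (fun hc => hpm (hc.trans hdvd))
    rw [← this]; ring
  rw [Finset.prod_congr rfl hS] at hmain2
  have hC : (∏ d ∈ (m.divisors.erase 1).erase m, (Ψ d).comp L) ≠ 0 := by
    rw [← Finset.prod_congr rfl hS]
    refine Finset.prod_ne_zero_iff.mpr fun d hd => ?_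
    have hd1 : 1 ≤ d := Nat.pos_of_mem_divisors
      (Finset.mem_of_mem_erase (Finset.mem_of_mem_erase hd))
    exact mul_ne_zero (hΨmonic d hd1).ne_zero
      (hΨmonic (p*d) (le_trans hd1 (Nat.le_mul_of_pos_left d hp.pos))).ne_zero
  have := mul_right_cancel₀ hC hmain2
  rw [← this]; ring

theorem fibotomic_pm_not_dvd
    (Ψ : ℕ → Polynomial ℤ) (hΨ1 : Ψ 1 = 1)
    (hΨmonic : ∀ n, 1 ≤ n → (Ψ n).Monic)
    (hΨprod : ∀ n, 1 ≤ n → fibPoly n = ∏ d ∈ n.divisors, Ψ d)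
    (p m : ℕ) (hp : p.Prime) (hp2 : p ≠ 2) (hm : 2 ≤ m) (hpm : ¬ p ∣ m) :
    Ψ (p * m) * Ψ m = (Ψ m).comp (X * Ψ (2 * p)) := by
  have hodd : Odd p := hp.odd_of_ne_two hp2
  have hΨp : fibPoly p = Ψ p := by
    have h := hΨprod p hp.one_lt.le
    rw [hp.divisors, Finset.prod_pair hp.one_lt.ne, hΨ1, one_mul] at h
    exact h
  have hΨ2 : fibPoly 2 = Ψ 2 := by
    have h := hΨprod 2 (by norm_num)
    rw [Nat.prime_two.divisors, Finset.prod_pair (by norm_num), hΨ1, one_mul] at h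
    exact h
  have h2p : ¬ (2:ℕ) ∣ p := by
    have := Nat.odd_iff.mp hodd; omega
  have hfibp : fibPoly p ≠ 0 := by rw [hΨp]; exact (hΨmonic p hp.one_le).ne_zero
  have hX : X * Ψ (2 * p) = fibPoly (p+1) + fibPoly (p-1) := by
    have hfib2p := hΨprod (2*p) (by have := hp.pos; omega)
    rw [prod_divisors_prime_mul Ψ Nat.prime_two hp.pos h2p, hp.divisors,
      Finset.prod_pair hp.one_lt.ne, Finset.prod_pair hp.one_lt.ne, hΨ1, one_mul,
      mul_one 2] at hfib2p
    have h2 := fibPoly_mul' p hodd 2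
    rw [mul_comm p 2, hfib2p, ← hΨp, ← hΨ2, fibPoly_two, X_comp] at h2
    exact mul_left_cancel₀ hfibp h2
  rw [hX]
  exact fibotomic_key Ψ hΨ1 hΨmonic hΨprod p hp hp2 m hm hpm
end

section
/- Let p be an odd prime and x > 0 a real number, and let ω = (x+√(x²+4))/2. Then ω^p − ω^{−p} = x·Ψ_{2p}(x). -/
open Polynomial

theorem omega_pow_sub_inv_pow
    (Ψ : ℕ → Polynomial ℤ) (hΨ1 : Ψ 1 = 1)
    (hΨmonic : ∀ n, 1 ≤ n → (Ψ n).Monic)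
    (hΨprod : ∀ n, 1 ≤ n → fibPoly n = ∏ d ∈ n.divisors, Ψ d)
    (p : ℕ) (hp : p.Prime) (hp2 : p ≠ 2) (x : ℝ) (hx : 0 < x)
    (ω : ℝ) (hω : ω = (x + Real.sqrt (x ^ 2 + 4)) / 2) :
    ω ^ (p : ℤ) - ω ^ (-(p : ℤ)) = x * (Polynomial.aeval x (Ψ (2 * p)) : ℝ) := by
  have hp3 : 3 ≤ p := by
    have := hp.two_le
    omega
  set s : ℝ := Real.sqrt (x ^ 2 + 4) with hs
  have hs2 : s ^ 2 = x ^ 2 + 4 := Real.sq_sqrt (by positivity)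
  have hspos : 0 < s := Real.sqrt_pos.2 (by positivity)
  set β : ℝ := (x - s) / 2 with hβ
  have hωβ : ω * β = -1 := by rw [hω, hβ]; nlinarith [hs2]
  have hωβsum : ω + β = x := by rw [hω, hβ]; ring
  have hωβdiff : ω - β = s := by rw [hω, hβ]; ring
  have hωpos : 0 < ω := by
    rw [hω]; have : 0 < x + s := by linarith
    linarith
  clear_value s β
  -- evaluation of Fibonacci polynomials
  have key : ∀ n : ℕ, (aeval x (fibPoly n) : ℝ) * s = ω ^ n - β ^ n := by
    intro n
    induction n using Nat.strong_induction_on with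
    | _ n ih =>
      match n with
      | 0 => simp [fibPoly]
      | 1 => simpa [fibPoly] using hωβdiff.symm
      | (m + 2) =>
        have h1 := ih (m + 1) (by omega)
        have h0 := ih m (by omega)
        have hω2 : ω ^ 2 = x * ω + 1 := by linear_combination ω * hωβsum - hωβ
        have hβ2 : β ^ 2 = x * β + 1 := by linear_combination β * hωβsum - hωβ
        have eω : ω ^ (m + 2) = x * ω ^ (m + 1) + ω ^ m := by
          have : ω ^ (m + 2) = ω ^ m * ω ^ 2 := by ring
          rw [this, hω2]; ring
        have eβ : β ^ (m + 2) = x * β ^ (m + 1) + β ^ m := by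
          have : β ^ (m + 2) = β ^ m * β ^ 2 := by ring
          rw [this, hβ2]; ring
        simp only [fibPoly, map_add, map_mul, aeval_X]
        rw [eω, eβ]
        linear_combination x * h1 + h0
  -- positivity
  have pos : ∀ n : ℕ, 0 ≤ (aeval x (fibPoly n) : ℝ) ∧
      (1 ≤ n → 0 < (aeval x (fibPoly n) : ℝ)) := by
    intro n
    induction n using Nat.strong_induction_on with
    | _ n ih =>
      match n with
      | 0 => simp [fibPoly]
      | 1 => simp [fibPoly]
      | (m + 2) =>
        have h1 := ih (m + 1) (by omega)
        have h0 := ih m (by omega)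
        have h1' := h1.2 (by omega)
        simp only [fibPoly, map_add, map_mul, aeval_X]
        constructor
        · nlinarith [h0.1]
        · intro _; nlinarith [h0.1]
  -- divisor structure
  have h2p : (2 * p).divisors = {1, 2, p, 2 * p} := by
    rw [Nat.divisors_mul, Nat.Prime.divisors hp, Nat.Prime.divisors Nat.prime_two]
    ext d
    simp only [Finset.mem_mul, Finset.mem_insert, Finset.mem_singleton]
    constructor
    · rintro ⟨a, ha, b, hb, rfl⟩
      rcases ha with rfl | rfl <;> rcases hb with hb | hb <;> rw [hb] <;> omega
    · rintro (rfl | rfl | h | h)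
      · exact ⟨1, by simp, 1, by simp, by ring⟩
      · exact ⟨2, by simp, 1, by simp, by ring⟩
      · exact ⟨1, by simp, p, by simp, by omega⟩
      · exact ⟨2, by simp, p, by simp, by omega⟩
  have hΨ2 : Ψ 2 = X := by
    have h := hΨprod 2 (by norm_num)
    rw [Nat.Prime.divisors Nat.prime_two] at h
    rw [Finset.prod_insert (by decide), Finset.prod_singleton, hΨ1, one_mul] at h
    rw [← h]
    simp [fibPoly]
  have hF2p : fibPoly (2 * p) = X * (Ψ p * Ψ (2 * p)) := by
    rw [hΨprod (2 * p) (by omega), h2p]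
    rw [Finset.prod_insert (by simp only [Finset.mem_insert, Finset.mem_singleton]; omega),
      Finset.prod_insert (by simp only [Finset.mem_insert, Finset.mem_singleton]; omega),
      Finset.prod_insert (by simp only [Finset.mem_singleton]; omega),
      Finset.prod_singleton, hΨ1, hΨ2]
    ring
  have hFp : fibPoly p = Ψ p := by
    rw [hΨprod p hp.one_le, Nat.Prime.divisors hp,
      Finset.prod_insert (by simp only [Finset.mem_singleton]; omega),
      Finset.prod_singleton, hΨ1, one_mul]
  -- key step: F_{2p}(x) = F_p(x) * (ω^p + β^p)
  have hstep : (aeval x (fibPoly (2 * p)) : ℝ) =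
      (aeval x (fibPoly p) : ℝ) * (ω ^ p + β ^ p) := by
    have h2 : (aeval x (fibPoly (2 * p)) : ℝ) * s =
        ((aeval x (fibPoly p) : ℝ) * (ω ^ p + β ^ p)) * s := by
      rw [key (2 * p)]
      have e1 : ω ^ (2 * p) = (ω ^ p) ^ 2 := by rw [mul_comm, pow_mul]
      have e2 : β ^ (2 * p) = (β ^ p) ^ 2 := by rw [mul_comm, pow_mul]
      rw [e1, e2]
      linear_combination -(ω ^ p + β ^ p) * (key p)
    exact mul_right_cancel₀ (ne_of_gt hspos) h2
  have hEppos : 0 < (aeval x (fibPoly p) : ℝ) := (pos p).2 hp.one_le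
  have hval : (aeval x (fibPoly (2 * p)) : ℝ) =
      x * ((aeval x (Ψ p) : ℝ) * (aeval x (Ψ (2 * p)) : ℝ)) := by
    rw [hF2p]; simp [map_mul]
  have hAp : (aeval x (fibPoly p) : ℝ) = (aeval x (Ψ p) : ℝ) := by rw [hFp]
  -- conclude ω^p + β^p = x * Ψ_{2p}(x)
  have hmain : ω ^ p + β ^ p = x * (aeval x (Ψ (2 * p)) : ℝ) := by
    have := hstep
    rw [hval, hAp] at this
    have hApne : (aeval x (Ψ p) : ℝ) ≠ 0 := by rw [← hAp]; exact ne_of_gt hEppos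
    have h' : (aeval x (Ψ p) : ℝ) * (x * (aeval x (Ψ (2 * p)) : ℝ)) =
        (aeval x (Ψ p) : ℝ) * (ω ^ p + β ^ p) := by linear_combination this
    exact (mul_left_cancel₀ hApne h').symm
  -- handle the zpow
  have hodd : Odd p := hp.odd_of_ne_two hp2
  have hβp : ω ^ p * β ^ p = -1 := by rw [← mul_pow, hωβ]; exact hodd.neg_one_pow
  have hω0 : (ω : ℝ) ^ p ≠ 0 := pow_ne_zero _ (ne_of_gt hωpos)
  have hinv : (ω ^ p)⁻¹ = -β ^ p := by
    have h1 : ω ^ p * (-β ^ p) = 1 := by rw [mul_neg, hβp]; norm_num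
    exact (eq_inv_of_mul_eq_one_right h1).symm
  rw [zpow_neg, zpow_natCast]
  rw [hinv]
  rw [← hmain]
  ring
end

section
/- For every integer n ≥ 2, the product ∏_{1≤s≤n−1, gcd(s,n)=1} sin(sπ/n) equals p/2^{φ(n)} if n = p^α is a prime power, and equals 1/2^{φ(n)} otherwise. -/
open Real Complex Polynomial Finset

lemma abs_one_sub_exp (θ : ℝ) :
    ‖1 - Complex.exp (θ * Complex.I)‖ = 2 * |Real.sin (θ/2)| := by
  have h2 : Real.cos θ = 1 - 2 * Real.sin (θ/2)^2 := by
    have := Real.cos_two_mul (θ/2)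
    have h := Real.sin_sq_add_cos_sq (θ/2)
    have : Real.cos (2 * (θ/2)) = 2 * Real.cos (θ/2)^2 - 1 := Real.cos_two_mul _
    rw [show 2 * (θ/2) = θ by ring] at this
    nlinarith
  rw [Complex.norm_def, Complex.normSq_apply]
  have hre : (1 - Complex.exp (θ * Complex.I)).re = 1 - Real.cos θ := by
    simp [Complex.exp_ofReal_mul_I_re]
  have him : (1 - Complex.exp (θ * Complex.I)).im = - Real.sin θ := by
    simp [Complex.exp_ofReal_mul_I_im]
  rw [hre, him]
  rw [show (1 - Real.cos θ) * (1 - Real.cos θ) + -Real.sin θ * -Real.sin θ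
      = (2 * |Real.sin (θ/2)|)^2 by
    rw [mul_pow, _root_.sq_abs]
    have h := Real.sin_sq_add_cos_sq θ
    nlinarith]
  exact Real.sqrt_sq (by positivity)

lemma key_prod (n : ℕ) (hn : 2 ≤ n) :
    (2:ℝ) ^ Nat.totient n * ∏ s ∈ (Finset.range n).filter (fun s => Nat.gcd s n = 1),
        Real.sin (s * Real.pi / n) = |Polynomial.eval 1 (Polynomial.cyclotomic n ℝ)| := by
  have hn0 : 0 < n := by omega
  have hnne : (n:ℂ) ≠ 0 := by exact_mod_cast hn0.ne'
  set S := (Finset.range n).filter (fun s => Nat.gcd s n = 1) with hS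
  set ζ : ℂ := Complex.exp (2 * Real.pi * Complex.I / n) with hζdef
  have hζ : IsPrimitiveRoot ζ n := Complex.isPrimitiveRoot_exp n hn0.ne'
  -- primitive roots as image
  have hinj : Set.InjOn (fun s => ζ ^ s) S := by
    intro a ha b hb hab
    exact hζ.pow_inj (Finset.mem_range.1 (Finset.mem_filter.1 ha).1)
      (Finset.mem_range.1 (Finset.mem_filter.1 hb).1) hab
  have himg : primitiveRoots n ℂ = S.image (fun s => ζ ^ s) := by
    apply Finset.eq_of_subset_of_card_le
    · intro x hx
      rw [mem_primitiveRoots hn0] at hx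
      have : NeZero n := ⟨hn0.ne'⟩
      obtain ⟨i, hi, rfl⟩ := hζ.eq_pow_of_pow_eq_one hx.pow_eq_one
      · exact Finset.mem_image.2 ⟨i, Finset.mem_filter.2 ⟨Finset.mem_range.2 hi,
          ((hζ.pow_iff_coprime hn0 i).1 (by simpa using hx))⟩, rfl⟩
    · rw [Finset.card_image_of_injOn hinj, hζ.card_primitiveRoots]
      apply le_of_eq
      rw [hS, Nat.totient]
      congr 1
      ext s
      simp [Nat.Coprime, Nat.gcd_comm]
  -- cyclotomic eval
  have hcyc : Polynomial.eval 1 (Polynomial.cyclotomic n ℂ) = ∏ s ∈ S, (1 - ζ ^ s) := by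
    rw [cyclotomic_eq_prod_X_sub_primitiveRoots hζ, Polynomial.eval_prod, himg,
      Finset.prod_image hinj]
    simp
  have hreal : Polynomial.eval 1 (Polynomial.cyclotomic n ℂ)
      = ((Polynomial.eval 1 (Polynomial.cyclotomic n ℝ) : ℝ) : ℂ) := by
    rw [← Polynomial.map_cyclotomic n (algebraMap ℝ ℂ), Polynomial.eval_map,
      Polynomial.eval₂_at_one]
    rfl
  have habs : ∀ s ∈ S, ‖1 - ζ ^ s‖ = 2 * Real.sin (s * Real.pi / n) := by
    intro s hs
    obtain ⟨hsr, hsc⟩ := Finset.mem_filter.1 hs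
    rw [Finset.mem_range] at hsr
    have hζs : ζ ^ s = Complex.exp ((2 * Real.pi * s / n : ℝ) * Complex.I) := by
      rw [hζdef, ← Complex.exp_nat_mul]
      push_cast
      congr 1
      field_simp
    rw [hζs, abs_one_sub_exp]
    have h1 : (2 * Real.pi * s / n) / 2 = s * Real.pi / n := by ring
    rw [h1, _root_.abs_of_nonneg]
    apply Real.sin_nonneg_of_nonneg_of_le_pi
    · positivity
    · rw [div_le_iff₀ (by positivity)]
      calc (s:ℝ) * Real.pi ≤ n * Real.pi := by
            have : (s:ℝ) ≤ n := by exact_mod_cast hsr.le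
            nlinarith [Real.pi_pos]
        _ = Real.pi * n := by ring
  calc (2:ℝ) ^ Nat.totient n * ∏ s ∈ S, Real.sin (s * Real.pi / n)
      = ∏ s ∈ S, (2 * Real.sin (s * Real.pi / n)) := by
        rw [Finset.prod_mul_distrib, Finset.prod_const]
        congr 2
        rw [hS, Nat.totient]
        congr 1
        ext s
        simp [Nat.Coprime, Nat.gcd_comm]
    _ = ∏ s ∈ S, ‖1 - ζ ^ s‖ := by
        exact (Finset.prod_congr rfl habs).symm
    _ = ‖∏ s ∈ S, (1 - ζ ^ s)‖ := (Complex.norm_prod _ _).symm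
    _ = |Polynomial.eval 1 (Polynomial.cyclotomic n ℝ)| := by
        rw [← hcyc, hreal, Complex.norm_real, Real.norm_eq_abs]

theorem prod_sin_coprime (n : ℕ) (hn : 2 ≤ n) :
    (∀ p α : ℕ, p.Prime → 0 < α → n = p ^ α →
      ∏ s ∈ (Finset.range n).filter (fun s => Nat.gcd s n = 1),
        Real.sin (s * Real.pi / n) = p / 2 ^ Nat.totient n) ∧
    ((¬∃ p α : ℕ, p.Prime ∧ 0 < α ∧ n = p ^ α) →
      ∏ s ∈ (Finset.range n).filter (fun s => Nat.gcd s n = 1),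
        Real.sin (s * Real.pi / n) = 1 / 2 ^ Nat.totient n) := by
  have key := key_prod n hn
  constructor
  · rintro p α hp hα rfl
    have : Fact p.Prime := ⟨hp⟩
    obtain ⟨k, rfl⟩ : ∃ k, α = k + 1 := ⟨α - 1, by omega⟩
    rw [Polynomial.eval_one_cyclotomic_prime_pow, _root_.abs_of_nonneg (by positivity)] at key
    field_simp at key ⊢
    simp only [mul_comm π] at ⊢
    linarith
  · intro h
    rw [Polynomial.eval_one_cyclotomic_not_prime_pow (fun {p} hp k hk => ?_)] at key
    · rw [abs_one] at key
      field_simp at key ⊢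
      simp only [mul_comm π] at ⊢
      linarith
    · rcases Nat.eq_zero_or_pos k with rfl | hk0
      · simp at hk; omega
      · exact h ⟨p, k, hp, hk0, hk.symm⟩
end

section
/- Let p be a prime, m ≥ 2 an integer with gcd(p,m)=1, and k a nonnegative integer. Then in (ℤ/pℤ)[x], Ψ_{p^k m}(x) ≡ Ψ_m(x)^{φ(p^k)} (mod p). -/
open Polynomial

namespace FibotomicAux

open Finset

/-- The Fibonacci polynomials reduced mod `p`. -/
noncomputable def fibZ (p : ℕ) (n : ℕ) : Polynomial (ZMod p) :=
  (fibPoly n).map (Int.castRingHom (ZMod p))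

lemma fibZ_zero (p : ℕ) : fibZ p 0 = 0 := by simp [fibZ, fibPoly]

lemma fibZ_one (p : ℕ) : fibZ p 1 = 1 := by simp [fibZ, fibPoly]

lemma fibZ_rec (p : ℕ) (n : ℕ) :
    fibZ p (n + 2) = X * fibZ p (n + 1) + fibZ p n := by
  simp [fibZ, fibPoly, Polynomial.map_add, Polynomial.map_mul]

/-- The mapped `Ψ` polynomials. -/
noncomputable def psiZ (Ψ : ℕ → Polynomial ℤ) (p : ℕ) (n : ℕ) : Polynomial (ZMod p) :=
  (Ψ n).map (Int.castRingHom (ZMod p))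

/-- Exponent appearing for `d = 1`: `Ψ_{p^k} ≡ Ψ_p ^ (tExp p k)`. -/
def tExp (p : ℕ) : ℕ → ℕ
  | 0 => 0
  | k + 1 => p ^ k

section Frobenius

variable (p : ℕ) [Fact p.Prime]

/-- Key Frobenius identity: `F_{pn} ≡ F_n^p * F_p (mod p)`. -/
lemma fibZ_p_mul (n : ℕ) (hn : 1 ≤ n) :
    fibZ p (p * n) = fibZ p n ^ p * fibZ p p := by
  have hp : p.Prime := Fact.out
  set R := Polynomial (ZMod p) with hR
  set q : Polynomial R := X ^ 2 - C X * X - 1 with hq_def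
  have hdeg : q.degree = 2 := by
    rw [hq_def]
    compute_degree!
  have hq : q.Monic := by
    rw [hq_def]
    monicity!
  set A := AdjoinRoot q with hA
  set y : A := AdjoinRoot.root q with hy
  set φ : R →+* A := AdjoinRoot.of q with hφ
  have hy2 : y ^ 2 = φ X * y + 1 := by
    have h0 := AdjoinRoot.eval₂_root q
    rw [hq_def] at h0
    simp only [eval₂_sub, eval₂_pow, eval₂_X, eval₂_one, eval₂_mul, eval₂_C] at h0
    have : y ^ 2 - φ X * y - 1 = 0 := h0
    linear_combination this
  have key : ∀ j : ℕ, y ^ (j + 1) = φ (fibZ p (j + 1)) * y + φ (fibZ p j) := by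
    intro j
    induction j with
    | zero => simp [fibZ_one, fibZ_zero]
    | succ i ih =>
      have h1 : y ^ (i + 1 + 1) = y * y ^ (i + 1) := by ring
      rw [h1, ih, fibZ_rec]
      calc y * (φ (fibZ p (i + 1)) * y + φ (fibZ p i))
          = φ (fibZ p (i + 1)) * y ^ 2 + φ (fibZ p i) * y := by ring
        _ = φ (fibZ p (i + 1)) * (φ X * y + 1) + φ (fibZ p i) * y := by rw [hy2]
        _ = φ (X * fibZ p (i + 1) + fibZ p i) * y + φ (fibZ p (i + 1)) := by
            simp only [map_add, map_mul]
            ring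
  haveI : CharP R p := charP_of_injective_ringHom (Polynomial.C_injective) p
  haveI : CharP A p :=
    charP_of_injective_ringHom
      (AdjoinRoot.of.injective_of_degree_ne_zero (by rw [hdeg]; norm_num)) p
  have ext2 : ∀ a b c d : R, φ a * y + φ b = φ c * y + φ d → a = c ∧ b = d := by
    intro a b c d h
    have hmk : ∀ u v : R, φ u * y + φ v = AdjoinRoot.mk q (C u * X + C v) := by
      intro u v
      rw [map_add, map_mul, AdjoinRoot.mk_X]
      rfl
    rw [hmk, hmk, AdjoinRoot.mk_eq_mk] at h
    have hz : (C a * X + C b) - (C c * X + C d) = 0 := by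
      refine Polynomial.eq_zero_of_dvd_of_degree_lt h ?_
      rw [hdeg]
      refine lt_of_le_of_lt (?_ : _ ≤ (1 : WithBot ℕ)) (by exact_mod_cast Nat.one_lt_two)
      compute_degree
    have h1 := congrArg (fun r : Polynomial R => r.coeff 1) hz
    have h0 := congrArg (fun r : Polynomial R => r.coeff 0) hz
    simp only [coeff_sub, coeff_add, coeff_C_mul, coeff_X_one, coeff_X_zero, coeff_C,
      mul_one, mul_zero, coeff_zero, one_ne_zero, if_false, if_pos rfl, add_zero, zero_add,
      sub_eq_zero] at h1 h0
    exact ⟨h1, h0⟩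
  obtain ⟨m, rfl⟩ : ∃ m, n = m + 1 := ⟨n - 1, by omega⟩
  have hidx : p * (m + 1) - 1 + 1 = p * (m + 1) := by
    have := hp.pos
    have : 1 ≤ p * (m + 1) := Nat.one_le_iff_ne_zero.mpr (by positivity)
    omega
  have h1 : y ^ (p * (m + 1)) =
      φ (fibZ p (p * (m + 1))) * y + φ (fibZ p (p * (m + 1) - 1)) := by
    have := key (p * (m + 1) - 1)
    rwa [hidx] at this
  have hyp : y ^ p = φ (fibZ p p) * y + φ (fibZ p (p - 1)) := by
    have h2 := key (p - 1)
    rwa [show p - 1 + 1 = p from by have := hp.pos; omega] at h2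
  have h3 : φ (fibZ p (p * (m + 1))) * y + φ (fibZ p (p * (m + 1) - 1)) =
      φ (fibZ p (m + 1) ^ p * fibZ p p) * y +
        φ (fibZ p (m + 1) ^ p * fibZ p (p - 1) + fibZ p m ^ p) := by
    rw [← h1, show p * (m + 1) = (m + 1) * p from mul_comm _ _, pow_mul, key m,
      add_pow_char, mul_pow, hyp]
    simp only [map_mul, map_add, map_pow]
    ring
  exact (ext2 _ _ _ _ h3).1

lemma fibZ_pow_mul (k d : ℕ) (hd : d ≠ 0) :
    fibZ p (p ^ k * d) = fibZ p d ^ p ^ k * fibZ p p ^ (∑ j ∈ range k, p ^ j) := by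
  have hp : p.Prime := Fact.out
  induction k with
  | zero => simp
  | succ k ih =>
    have h1 : p ^ (k + 1) * d = p * (p ^ k * d) := by ring
    have h2 : 1 ≤ p ^ k * d := Nat.mul_pos (pow_pos hp.pos k) (Nat.pos_of_ne_zero hd)
    have hsum : ∀ k : ℕ, ∑ j ∈ range (k + 1), p ^ j = (∑ j ∈ range k, p ^ j) * p + 1 := by
      intro k
      rw [Finset.sum_range_succ', Finset.sum_mul]
      simp [pow_succ]
    rw [h1, fibZ_p_mul p _ h2, ih, hsum k, pow_succ]
    ring

end Frobenius

lemma pow_mul_inj {p : ℕ} (hp : p.Prime) {j k e d : ℕ} (he : Nat.Coprime p e)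
    (hd : Nat.Coprime p d) (he0 : e ≠ 0) (hd0 : d ≠ 0)
    (h : p ^ j * e = p ^ k * d) : j = k ∧ e = d := by
  have hfac : ∀ (i x : ℕ), Nat.Coprime p x → x ≠ 0 → (p ^ i * x).factorization p = i := by
    intro i x hx hx0
    have h1 : (p ^ i).factorization p = i := by
      rw [hp.factorization_pow, Finsupp.single_eq_same]
    have h2 : x.factorization p = 0 :=
      Nat.factorization_eq_zero_of_not_dvd ((hp.coprime_iff_not_dvd).mp hx)
    rw [Nat.factorization_mul (pow_ne_zero i hp.pos.ne') hx0]
    simp only [Finsupp.coe_add, Pi.add_apply, h1, h2, add_zero]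
  have hj : j = k := by
    have := congrArg (fun t : ℕ => t.factorization p) h
    simpa [hfac j e he he0, hfac k d hd hd0] using this
  subst hj
  exact ⟨rfl, Nat.eq_of_mul_eq_mul_left (pow_pos hp.pos j) h⟩

lemma prod_divisors_pow_mul {M : Type*} [CommMonoid M] {p : ℕ} (hp : p.Prime) {d : ℕ}
    (hd : d ≠ 0) (hcop : Nat.Coprime p d) (k : ℕ) (f : ℕ → M) :
    ∏ t ∈ (p ^ k * d).divisors, f t =
      ∏ x ∈ Finset.range (k + 1) ×ˢ d.divisors, f (p ^ x.1 * x.2) := by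
  have hn0 : p ^ k * d ≠ 0 := (Nat.mul_pos (pow_pos hp.pos k) (Nat.pos_of_ne_zero hd)).ne'
  refine (Finset.prod_bij (fun x _ => p ^ x.1 * x.2) ?_ ?_ ?_ (fun a _ => rfl)).symm
  · rintro ⟨j, e⟩ hx
    simp only [Finset.mem_product, Finset.mem_range, Nat.mem_divisors] at hx
    exact Nat.mem_divisors.mpr
      ⟨mul_dvd_mul (pow_dvd_pow p (by omega)) hx.2.1, hn0⟩
  · rintro ⟨j, e⟩ hx ⟨j', e'⟩ hx' h
    simp only [Finset.mem_product, Finset.mem_range, Nat.mem_divisors] at hx hx'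
    obtain ⟨h1, h2⟩ := pow_mul_inj hp (hcop.coprime_dvd_right hx.2.1)
      (hcop.coprime_dvd_right hx'.2.1)
      (ne_of_gt (Nat.pos_of_dvd_of_pos hx.2.1 (Nat.pos_of_ne_zero hd)))
      (ne_of_gt (Nat.pos_of_dvd_of_pos hx'.2.1 (Nat.pos_of_ne_zero hd))) h
    exact Prod.ext h1 h2
  · intro t ht
    rw [Nat.mem_divisors] at ht
    have ht0 : t ≠ 0 := ne_of_gt (Nat.pos_of_dvd_of_pos ht.1 (Nat.pos_of_ne_zero hn0))
    set j := t.factorization p with hj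
    set e := t / p ^ j with he
    have hte : p ^ j * e = t := Nat.ordProj_mul_ordCompl_eq_self t p
    have hpe : ¬p ∣ e := Nat.not_dvd_ordCompl hp ht0
    have hcope : Nat.Coprime p e := (hp.coprime_iff_not_dvd).mpr hpe
    have hed : e ∣ d := by
      have h1 : e ∣ p ^ k * d := dvd_trans (Nat.ordCompl_dvd t p) ht.1
      exact (Nat.Coprime.pow_right k hcope.symm).dvd_of_dvd_mul_left h1
    have hjk : j ≤ k := by
      have h1 : p ^ j ∣ p ^ k * d := dvd_trans (Nat.ordProj_dvd t p) ht.1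
      have h2 : p ^ j ∣ p ^ k :=
        (Nat.Coprime.pow_left j hcop).dvd_of_dvd_mul_right h1
      exact (Nat.pow_dvd_pow_iff_le_right hp.one_lt).mp h2
    refine ⟨(j, e), ?_, hte⟩
    simp only [Finset.mem_product, Finset.mem_range, Nat.mem_divisors]
    exact ⟨by omega, hed, hd⟩

lemma sum_totient_pow {p : ℕ} (hp : p.Prime) (k : ℕ) :
    ∑ j ∈ Finset.range (k + 1), (p ^ j).totient = p ^ k := by
  induction k with
  | zero => simp
  | succ k ih =>
    rw [Finset.sum_range_succ, ih, Nat.totient_prime_pow hp (Nat.succ_pos k)]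
    have h1 : k + 1 - 1 = k := by omega
    rw [h1]
    calc p ^ k + p ^ k * (p - 1) = p ^ k * (1 + (p - 1)) := by ring
      _ = p ^ k * p := by rw [show 1 + (p - 1) = p from by have := hp.pos; omega]
      _ = p ^ (k + 1) := by ring

lemma sum_tExp (p : ℕ) (k : ℕ) :
    ∑ j ∈ Finset.range (k + 1), tExp p j = ∑ j ∈ Finset.range k, p ^ j := by
  induction k with
  | zero => simp [tExp]
  | succ k ih =>
    rw [Finset.sum_range_succ, ih, Finset.sum_range_succ]
    rfl

lemma psi_key (Ψ : ℕ → Polynomial ℤ) (hΨ1 : Ψ 1 = 1)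
    (hΨmonic : ∀ n, 1 ≤ n → (Ψ n).Monic)
    (hΨprod : ∀ n, 1 ≤ n → fibPoly n = ∏ d ∈ n.divisors, Ψ d)
    (p : ℕ) [Fact p.Prime] :
    ∀ n k d, d ≠ 0 → Nat.Coprime p d → n = p ^ k * d →
      psiZ Ψ p n =
        (if d = 1 then psiZ Ψ p p ^ tExp p k
         else psiZ Ψ p d ^ (p ^ k).totient) := by
  have hp : p.Prime := Fact.out
  have hpsi1 : psiZ Ψ p 1 = 1 := by simp [psiZ, hΨ1]
  have hmono : ∀ x, 1 ≤ x → (psiZ Ψ p x).Monic := fun x hx => (hΨmonic x hx).map _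
  have hfib : ∀ x, 1 ≤ x → fibZ p x = ∏ t ∈ x.divisors, psiZ Ψ p t := by
    intro x hx
    rw [fibZ, hΨprod x hx, Polynomial.map_prod]
    rfl
  have hfibp : fibZ p p = psiZ Ψ p p := by
    rw [hfib p hp.pos, hp.divisors, Finset.prod_pair hp.one_lt.ne, hpsi1, one_mul]
  intro n
  induction n using Nat.strongRecOn with
  | ind n IH =>
    rintro k d hd0 hcop rfl
    have hnpos : 0 < p ^ k * d := Nat.mul_pos (pow_pos hp.pos k) (Nat.pos_of_ne_zero hd0)
    set S := Finset.range (k + 1) ×ˢ d.divisors with hS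
    set g : ℕ × ℕ → Polynomial (ZMod p) := fun x => psiZ Ψ p (p ^ x.1 * x.2) with hg
    set h : ℕ × ℕ → Polynomial (ZMod p) := fun x =>
      if x.2 = 1 then psiZ Ψ p p ^ tExp p x.1 else psiZ Ψ p x.2 ^ (p ^ x.1).totient with hh
    have htop : (k, d) ∈ S := by
      simp only [hS, Finset.mem_product, Finset.mem_range, Nat.mem_divisors]
      exact ⟨by omega, dvd_refl d, hd0⟩
    have hprod_g : ∏ x ∈ S, g x = fibZ p (p ^ k * d) := by
      rw [hfib _ hnpos, prod_divisors_pow_mul hp hd0 hcop k (psiZ Ψ p)]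
    have hmono_h : ∀ x ∈ S, (h x).Monic := by
      rintro ⟨j, e⟩ hx
      simp only [hS, Finset.mem_product, Finset.mem_range, Nat.mem_divisors] at hx
      have he1 : 1 ≤ e := Nat.pos_of_dvd_of_pos hx.2.1 (Nat.pos_of_ne_zero hd0)
      by_cases hcase : e = 1
      · subst hcase
        simpa only [hh, if_pos rfl] using (hmono p hp.pos).pow _
      · simpa only [hh, if_neg hcase] using (hmono e he1).pow _
    have hprod_h : ∏ x ∈ S, h x =
        fibZ p d ^ p ^ k * fibZ p p ^ (∑ j ∈ Finset.range k, p ^ j) := by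
      rw [hS, Finset.prod_product]
      have hinner : ∀ j : ℕ, ∏ e ∈ d.divisors, h (j, e) =
          psiZ Ψ p p ^ tExp p j * fibZ p d ^ (p ^ j).totient := by
        intro j
        have h1d : (1 : ℕ) ∈ d.divisors := Nat.one_mem_divisors.mpr hd0
        rw [← Finset.mul_prod_erase _ _ h1d]
        have hterm1 : h (j, 1) = psiZ Ψ p p ^ tExp p j := by simp [hh]
        have hrest : ∏ e ∈ d.divisors.erase 1, h (j, e) =
            ∏ e ∈ d.divisors.erase 1, psiZ Ψ p e ^ (p ^ j).totient := by
          refine Finset.prod_congr rfl fun e he => ?_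
          have : e ≠ 1 := (Finset.mem_erase.mp he).1
          simp [hh, this]
        rw [hterm1, hrest, Finset.prod_pow]
        congr 1
        congr 1
        rw [Finset.prod_erase _ hpsi1, ← hfib d (Nat.pos_of_ne_zero hd0)]
      calc ∏ j ∈ Finset.range (k + 1), ∏ e ∈ d.divisors, h (j, e)
          = ∏ j ∈ Finset.range (k + 1),
              (psiZ Ψ p p ^ tExp p j * fibZ p d ^ (p ^ j).totient) :=
            Finset.prod_congr rfl fun j _ => hinner j
        _ = (∏ j ∈ Finset.range (k + 1), psiZ Ψ p p ^ tExp p j) *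
              ∏ j ∈ Finset.range (k + 1), fibZ p d ^ (p ^ j).totient :=
            Finset.prod_mul_distrib
        _ = psiZ Ψ p p ^ (∑ j ∈ Finset.range (k + 1), tExp p j) *
              fibZ p d ^ (∑ j ∈ Finset.range (k + 1), (p ^ j).totient) := by
            rw [Finset.prod_pow_eq_pow_sum, Finset.prod_pow_eq_pow_sum]
        _ = fibZ p d ^ p ^ k * fibZ p p ^ (∑ j ∈ Finset.range k, p ^ j) := by
            rw [sum_tExp, sum_totient_pow hp, hfibp, mul_comm]
    have heq_rest : ∀ x ∈ S.erase (k, d), g x = h x := by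
      rintro ⟨j, e⟩ hx
      have hx' := Finset.mem_of_mem_erase hx
      have hxne := (Finset.mem_erase.mp hx).1
      simp only [hS, Finset.mem_product, Finset.mem_range, Nat.mem_divisors] at hx'
      have he0 : e ≠ 0 :=
        ne_of_gt (Nat.pos_of_dvd_of_pos hx'.2.1 (Nat.pos_of_ne_zero hd0))
      have hcope : Nat.Coprime p e := hcop.coprime_dvd_right hx'.2.1
      have hne : p ^ j * e ≠ p ^ k * d := by
        intro hcontra
        obtain ⟨h1, h2⟩ := pow_mul_inj hp hcope hcop he0 hd0 hcontra
        exact hxne (Prod.ext h1 h2)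
      have hdvd : p ^ j * e ∣ p ^ k * d :=
        mul_dvd_mul (pow_dvd_pow p (by omega)) hx'.2.1
      have hlt : p ^ j * e < p ^ k * d :=
        lt_of_le_of_ne (Nat.le_of_dvd hnpos hdvd) hne
      exact IH _ hlt j e he0 hcope rfl
    have hrest_ne : ∏ x ∈ S.erase (k, d), h x ≠ 0 := by
      rw [Finset.prod_ne_zero_iff]
      intro x hx
      exact (hmono_h x (Finset.mem_of_mem_erase hx)).ne_zero
    have main_eq : g (k, d) * ∏ x ∈ S.erase (k, d), h x =
        h (k, d) * ∏ x ∈ S.erase (k, d), h x := by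
      calc g (k, d) * ∏ x ∈ S.erase (k, d), h x
          = g (k, d) * ∏ x ∈ S.erase (k, d), g x := by
            rw [Finset.prod_congr rfl fun x hx => (heq_rest x hx).symm]
        _ = ∏ x ∈ S, g x := Finset.mul_prod_erase S g htop
        _ = fibZ p (p ^ k * d) := hprod_g
        _ = fibZ p d ^ p ^ k * fibZ p p ^ (∑ j ∈ Finset.range k, p ^ j) :=
            fibZ_pow_mul p k d hd0
        _ = ∏ x ∈ S, h x := hprod_h.symm
        _ = h (k, d) * ∏ x ∈ S.erase (k, d), h x :=
            (Finset.mul_prod_erase S h htop).symm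
    have := mul_right_cancel₀ hrest_ne main_eq
    exact this

end FibotomicAux

theorem fibotomic_prime_pow_mul_mod_p
    (Ψ : ℕ → Polynomial ℤ) (hΨ1 : Ψ 1 = 1)
    (hΨmonic : ∀ n, 1 ≤ n → (Ψ n).Monic)
    (hΨprod : ∀ n, 1 ≤ n → fibPoly n = ∏ d ∈ n.divisors, Ψ d)
    (p m k : ℕ) (hp : p.Prime) (hm : 2 ≤ m) (hgcd : Nat.gcd p m = 1) :
    (Ψ (p ^ k * m)).map (Int.castRingHom (ZMod p)) =
      ((Ψ m).map (Int.castRingHom (ZMod p))) ^ Nat.totient (p ^ k) := by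
  haveI : Fact p.Prime := ⟨hp⟩
  have h := FibotomicAux.psi_key Ψ hΨ1 hΨmonic hΨprod p (p ^ k * m) k m
    (by omega) hgcd rfl
  rw [if_neg (by omega : m ≠ 1)] at h
  exact h
end

section
/- Let m ≥ 3 be an odd integer, let ζ be a primitive m-th root of unity in an algebraic closure of 𝔽_2, let u' be the multiplicative order of 2 modulo m, and let s be coprime to m. Then the degree of the minimal polynomial of ζ^s + ζ^{−s} over 𝔽_2 is u'/2 if u' is even and 2^{u'/2} ≡ −1 (mod m), and is u' otherwise. -/
open Polynomial IntermediateField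

local notation "K2" => AlgebraicClosure (ZMod 2)

private lemma aux_field_identity {K : Type*} [Field K] (x y : K) (hx : x ≠ 0) (hy : y ≠ 0) :
    (x - y) * (x - y⁻¹) = x * ((x + x⁻¹) - (y + y⁻¹)) := by
  field_simp
  ring

private lemma aux_sum_eq_sum_iff {K : Type*} [Field K] {m : ℕ} (hm : 0 < m) {ζ : K}
    (hζ : IsPrimitiveRoot ζ m) (a b : ℤ) :
    ζ ^ a + ζ ^ (-a) = ζ ^ b + ζ ^ (-b) ↔ ((m : ℤ) ∣ a - b ∨ (m : ℤ) ∣ a + b) := by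
  have hz : ζ ≠ 0 := hζ.ne_zero hm.ne'
  have hx : ζ ^ a ≠ 0 := zpow_ne_zero _ hz
  have hy : ζ ^ b ≠ 0 := zpow_ne_zero _ hz
  constructor
  · intro h
    have key : (ζ ^ a - ζ ^ b) * (ζ ^ a - (ζ ^ b)⁻¹) = 0 := by
      rw [aux_field_identity _ _ hx hy, ← zpow_neg, ← zpow_neg, h, sub_self, mul_zero]
    rcases mul_eq_zero.mp key with h' | h'
    · left
      rw [← hζ.zpow_eq_one_iff_dvd]
      have : ζ ^ a = ζ ^ b := by linear_combination h'
      rw [zpow_sub₀ hz, this, div_self hy]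
    · right
      rw [← hζ.zpow_eq_one_iff_dvd]
      have : ζ ^ a = (ζ ^ b)⁻¹ := by linear_combination h'
      rw [zpow_add₀ hz, this, inv_mul_cancel₀ hy]
  · intro h
    have key : ∀ c d : ℤ, (m : ℤ) ∣ c - d → ζ ^ c = ζ ^ d := by
      intro c d hcd
      have h1 : ζ ^ (c - d) = 1 := (hζ.zpow_eq_one_iff_dvd _).mpr hcd
      calc ζ ^ c = ζ ^ (c - d) * ζ ^ d := by rw [← zpow_add₀ hz]; ring_nf
        _ = ζ ^ d := by rw [h1, one_mul]
    rcases h with h | h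
    · obtain ⟨c, hc⟩ := h
      rw [key a b ⟨c, hc⟩, key (-a) (-b) ⟨-c, by rw [mul_neg, ← hc]; ring⟩]
    · obtain ⟨c, hc⟩ := h
      rw [key a (-b) ⟨c, by rw [← hc]; ring⟩, key (-a) b ⟨-c, by rw [mul_neg, ← hc]; ring⟩, add_comm]

private lemma aux_pow_card (α : K2) :
    α ^ (2 ^ (minpoly (ZMod 2) α).natDegree) = α := by
  have hint : IsIntegral (ZMod 2) α := Algebra.IsIntegral.isIntegral α
  haveI : FiniteDimensional (ZMod 2) (ZMod 2)⟮α⟯ := adjoin.finiteDimensional hint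
  haveI : Finite ((ZMod 2)⟮α⟯) := Module.finite_of_finite (ZMod 2)
  haveI : Fintype ((ZMod 2)⟮α⟯) := Fintype.ofFinite _
  have hcard : Fintype.card (ZMod 2)⟮α⟯ = 2 ^ (minpoly (ZMod 2) α).natDegree := by
    rw [Module.card_eq_pow_finrank (K := ZMod 2), ZMod.card, adjoin.finrank hint]
  have h := FiniteField.pow_card (AdjoinSimple.gen (ZMod 2) α)
  rw [hcard] at h
  have := congrArg (algebraMap (ZMod 2)⟮α⟯ K2) h
  rwa [map_pow, AdjoinSimple.algebraMap_gen] at this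

private lemma aux_natDegree_le (α : K2) (d : ℕ) (hd : 0 < d) (h : α ^ 2 ^ d = α) :
    (minpoly (ZMod 2) α).natDegree ≤ d := by
  classical
  have hint : IsIntegral (ZMod 2) α := Algebra.IsIntegral.isIntegral α
  haveI : FiniteDimensional (ZMod 2) (ZMod 2)⟮α⟯ := adjoin.finiteDimensional hint
  haveI : Finite ((ZMod 2)⟮α⟯) := Module.finite_of_finite (ZMod 2)
  haveI : Fintype ((ZMod 2)⟮α⟯) := Fintype.ofFinite _
  have hcard : Fintype.card (ZMod 2)⟮α⟯ = 2 ^ (minpoly (ZMod 2) α).natDegree := by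
    rw [Module.card_eq_pow_finrank (K := ZMod 2), ZMod.card, adjoin.finrank hint]
  -- every element of the adjoined field is fixed by the d-th power of Frobenius
  have hfix : ∀ x : (ZMod 2)⟮α⟯, (x : K2) ^ 2 ^ d = (x : K2) := by
    rintro ⟨x, hx⟩
    refine adjoin_induction (ZMod 2) (p := fun y _ => y ^ 2 ^ d = y) ?_ ?_ ?_ ?_ ?_ hx
    · rintro y (rfl : y = α)
      exact h
    · intro c
      have hc : c = 0 ∨ c = 1 := by revert c; decide
      rcases hc with rfl | rfl <;> simp
    · intro x y _ _ hx hy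
      haveI : Fact (Nat.Prime 2) := ⟨Nat.prime_two⟩
      rw [add_pow_char_pow, hx, hy]
    · intro x _ hx
      rw [inv_pow, hx]
    · intro x y _ _ hx hy
      rw [mul_pow, hx, hy]
  -- elements are roots of X^(2^d) - X
  set P : K2[X] := X ^ 2 ^ d - X with hP
  have hPne : P ≠ 0 := by
    intro h0
    have : P.coeff (2 ^ d) = 1 := by
      have h2d : 2 ^ d ≠ 1 := by
        have : 2 ≤ 2 ^ d := Nat.one_lt_two_pow_iff.mpr hd.ne'
        omega
      simp [hP, coeff_X_pow, coeff_X, h2d, Ne.symm h2d]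
    rw [h0] at this
    simp at this
  have hmem : ∀ x : (ZMod 2)⟮α⟯, (x : K2) ∈ P.roots.toFinset := by
    intro x
    rw [Multiset.mem_toFinset, mem_roots hPne]
    simp [hP, hfix x]
  have hinj : Function.Injective (fun x : (ZMod 2)⟮α⟯ => (x : K2)) := Subtype.val_injective
  have hcardle : Fintype.card (ZMod 2)⟮α⟯ ≤ P.roots.toFinset.card := by
    have := Finset.card_le_card (Finset.image_subset_iff.mpr
      (fun x _ => hmem x) : Finset.univ.image (fun x : (ZMod 2)⟮α⟯ => (x : K2)) ⊆ P.roots.toFinset)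
    rwa [Finset.card_image_of_injective _ hinj, Finset.card_univ] at this
  have hroots : P.roots.toFinset.card ≤ 2 ^ d := by
    calc P.roots.toFinset.card ≤ Multiset.card P.roots := Multiset.toFinset_card_le _
      _ ≤ P.natDegree := P.card_roots'
      _ ≤ 2 ^ d := by
          calc P.natDegree ≤ max (X ^ 2 ^ d : K2[X]).natDegree (X : K2[X]).natDegree :=
                natDegree_sub_le _ _
            _ ≤ 2 ^ d := by
                simp [natDegree_X_pow, natDegree_X]
                have : 2 ≤ 2 ^ d := Nat.one_lt_two_pow_iff.mpr hd.ne'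
                omega
  have : 2 ^ (minpoly (ZMod 2) α).natDegree ≤ 2 ^ d := by
    rw [← hcard]; exact le_trans hcardle hroots
  exact (Nat.pow_le_pow_iff_right (by norm_num)).mp this

theorem minpoly_degree_char_two
    (m : ℕ) (hm : 3 ≤ m) (hodd : Odd m)
    (ζ : AlgebraicClosure (ZMod 2)) (hζ : IsPrimitiveRoot ζ m)
    (u' : ℕ) (hu' : IsLeast {k : ℕ | 0 < k ∧ 2 ^ k ≡ 1 [MOD m]} u')
    (s : ℕ) (hs : 0 < s) (hsm : Nat.gcd s m = 1) :
    (Even u' ∧ (2 : ℤ) ^ (u' / 2) ≡ -1 [ZMOD (m : ℕ)] →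
      (minpoly (ZMod 2) (ζ ^ s + ζ⁻¹ ^ s)).natDegree = u' / 2) ∧
    (¬(Even u' ∧ (2 : ℤ) ^ (u' / 2) ≡ -1 [ZMOD (m : ℕ)]) →
      (minpoly (ZMod 2) (ζ ^ s + ζ⁻¹ ^ s)).natDegree = u') := by
  haveI : NeZero m := ⟨by omega⟩
  haveI : Fact (Nat.Prime 2) := ⟨Nat.prime_two⟩
  have hζ0 : ζ ≠ 0 := hζ.ne_zero (by omega)
  set α := ζ ^ s + ζ⁻¹ ^ s with hα
  set k := (minpoly (ZMod 2) α).natDegree with hk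
  have hαz : α = ζ ^ (s : ℤ) + ζ ^ (-(s : ℤ)) := by
    rw [hα, zpow_natCast, zpow_neg, zpow_natCast, inv_pow]
  -- coprimality
  have hco : IsCoprime (m : ℤ) (s : ℤ) := by
    rw [Int.isCoprime_iff_gcd_eq_one, Int.gcd_natCast_natCast, Nat.gcd_comm]
    exact hsm
  -- the bridge
  have bridge : ∀ d : ℕ, α ^ 2 ^ d = α ↔ ((2 : ZMod m) ^ d = 1 ∨ (2 : ZMod m) ^ d = -1) := by
    intro d
    have hchar : α ^ 2 ^ d = ζ ^ ((s : ℤ) * 2 ^ d) + ζ ^ (-((s : ℤ) * 2 ^ d)) := by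
      rw [hαz, add_pow_char_pow (p := 2)]
      rw [← zpow_natCast (ζ ^ (s : ℤ)), ← zpow_mul, ← zpow_natCast (ζ ^ (-(s : ℤ))), ← zpow_mul]
      push_cast
      ring_nf
    rw [hchar, hαz, aux_sum_eq_sum_iff (by omega) hζ]
    have e1 : (s : ℤ) * 2 ^ d - s = s * (2 ^ d - 1) := by ring
    have e2 : (s : ℤ) * 2 ^ d + s = s * (2 ^ d + 1) := by ring
    rw [e1, e2]
    have c1 : (m : ℤ) ∣ (s : ℤ) * (2 ^ d - 1) ↔ (m : ℤ) ∣ (2 ^ d - 1) := by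
      constructor
      · intro h; exact hco.dvd_of_dvd_mul_left h
      · intro h; exact Dvd.dvd.mul_left h s
    have c2 : (m : ℤ) ∣ (s : ℤ) * (2 ^ d + 1) ↔ (m : ℤ) ∣ (2 ^ d + 1) := by
      constructor
      · intro h; exact hco.dvd_of_dvd_mul_left h
      · intro h; exact Dvd.dvd.mul_left h s
    rw [c1, c2]
    constructor
    · rintro (h | h)
      · left
        have := (ZMod.intCast_zmod_eq_zero_iff_dvd ((2:ℤ) ^ d - 1) m).mpr h
        push_cast at this
        linear_combination this
      · right
        have := (ZMod.intCast_zmod_eq_zero_iff_dvd ((2:ℤ) ^ d + 1) m).mpr h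
        push_cast at this
        linear_combination this
    · rintro (h | h)
      · left
        rw [← ZMod.intCast_zmod_eq_zero_iff_dvd]
        push_cast
        linear_combination h
      · right
        rw [← ZMod.intCast_zmod_eq_zero_iff_dvd]
        push_cast
        linear_combination h
  -- order of 2 mod m is u'
  have hu'pos : 0 < u' := hu'.1.1
  have hpow1 : ∀ j : ℕ, 2 ^ j ≡ 1 [MOD m] ↔ (2 : ZMod m) ^ j = 1 := by
    intro j
    rw [← ZMod.natCast_eq_natCast_iff]
    push_cast
    rfl
  have horder : orderOf (2 : ZMod m) = u' := by
    rw [orderOf_eq_iff hu'pos]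
    constructor
    · exact (hpow1 u').mp hu'.1.2
    · intro j hj hjpos h1
      exact absurd (hu'.2 ⟨hjpos, (hpow1 j).mpr h1⟩) (by omega)
  have hdvd : ∀ j : ℕ, (2 : ZMod m) ^ j = 1 → u' ∣ j := by
    intro j hj
    rw [← horder]
    exact orderOf_dvd_of_pow_eq_one hj
  have hintcast : (2 : ℤ) ^ (u' / 2) ≡ -1 [ZMOD (m : ℕ)] ↔ (2 : ZMod m) ^ (u' / 2) = -1 := by
    rw [← ZMod.intCast_eq_intCast_iff]
    push_cast
    rfl
  have hkpos : 0 < k := minpoly.natDegree_pos (Algebra.IsIntegral.isIntegral α)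
  have hkmem : (2 : ZMod m) ^ k = 1 ∨ (2 : ZMod m) ^ k = -1 :=
    (bridge k).mp (aux_pow_card α)
  constructor
  · rintro ⟨heven, hneg⟩
    rw [hintcast] at hneg
    have hd0pos : 0 < u' / 2 := by
      obtain ⟨t, ht⟩ := heven; omega
    -- lower bound: u'/2 ≤ k
    have hlow : u' / 2 ≤ k := by
      rcases hkmem with h1 | h1
      · have := Nat.le_of_dvd hkpos (hdvd k h1)
        omega
      · have h2 : (2 : ZMod m) ^ (2 * k) = 1 := by
          rw [pow_mul']
          rw [h1]
          ring
        have := Nat.le_of_dvd (by omega) (hdvd _ h2)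
        obtain ⟨t, ht⟩ := heven
        omega
    have hup : k ≤ u' / 2 := by
      apply aux_natDegree_le α _ hd0pos
      exact (bridge _).mpr (Or.inr hneg)
    omega
  · intro hnot
    -- lower bound: u' ≤ k
    have hlow : u' ≤ k := by
      rcases hkmem with h1 | h1
      · exact Nat.le_of_dvd hkpos (hdvd k h1)
      · by_contra hlt
        push_neg at hlt
        have h2 : (2 : ZMod m) ^ (2 * k) = 1 := by
          rw [pow_mul', h1]; ring
        have hd2 := hdvd _ h2
        have hle := Nat.le_of_dvd (by omega) hd2
        -- u' ∣ 2k, u' ≤ 2k < 2u' so 2k = u'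
        have h2k : 2 * k = u' := by
          obtain ⟨c, hc⟩ := hd2
          rcases Nat.lt_or_ge c 2 with hc2 | hc2
          · interval_cases c <;> omega
          · nlinarith
        apply hnot
        refine ⟨⟨k, by omega⟩, ?_⟩
        rw [hintcast]
        have : u' / 2 = k := by omega
        rw [this]
        exact h1
    have hup : k ≤ u' := by
      apply aux_natDegree_le α _ hu'pos
      apply (bridge _).mpr
      left
      exact (hpow1 u').mp hu'.1.2
    omega
end

section
/- Let p > 2 be prime, m ≥ 3 with gcd(p,m)=1, let u be the multiplicative order of p modulo 2m, let ζ be a primitive 2m-th root of unity and i a primitive 4th root of unity in an algebraic closure of 𝔽_p, and let s be coprime to m. If p ≡ 3 (mod 4) and u is odd, then the degree of the minimal polynomial of i(ζ^s + ζ^{−s}) over 𝔽_p equals 2u. -/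
open Polynomial IntermediateField

private lemma pow_eq_pow_of_modEq_aux {M : Type*} [Monoid M] {x : M} {n : ℕ} (hx : x ^ n = 1)
    {a b : ℕ} (h : a ≡ b [MOD n]) : x ^ a = x ^ b := by
  wlog hab : b ≤ a generalizing a b
  · exact (this h.symm (le_of_not_ge hab)).symm
  obtain ⟨c, hc⟩ := (Nat.modEq_iff_dvd' hab).mp h.symm
  have : a = b + n * c := by omega
  rw [this, pow_add, pow_mul, hx, one_pow, mul_one]

private lemma sum_inv_cases {K : Type*} [Field K] {x y : K} (hx : x ≠ 0) (hy : y ≠ 0)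
    (h : x + x⁻¹ = y + y⁻¹) : x = y ∨ x * y = 1 := by
  have h2 : (x - y) * (x * y - 1) = 0 := by
    field_simp at h
    linear_combination h
  rcases mul_eq_zero.mp h2 with h3 | h3
  · exact Or.inl (sub_eq_zero.mp h3)
  · exact Or.inr (by linear_combination h3)

private lemma least_dvd {p n u : ℕ} (hu : IsLeast {k : ℕ | 0 < k ∧ p ^ k ≡ 1 [MOD n]} u)
    {j : ℕ} (hj : p ^ j ≡ 1 [MOD n]) : u ∣ j := by
  obtain ⟨⟨hupos, hu1⟩, hmin⟩ := hu
  rw [Nat.dvd_iff_mod_eq_zero]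
  by_contra hr
  have hrlt : j % u < u := Nat.mod_lt _ hupos
  have h1 : p ^ j ≡ p ^ (j % u) [MOD n] := by
    calc p ^ j = (p ^ u) ^ (j / u) * p ^ (j % u) := by
          rw [← pow_mul, ← pow_add, Nat.div_add_mod]
    _ ≡ 1 ^ (j / u) * p ^ (j % u) [MOD n] := ((hu1.pow _).mul_right _)
    _ = p ^ (j % u) := by rw [one_pow, one_mul]
  have : p ^ (j % u) ≡ 1 [MOD n] := h1.symm.trans hj
  exact absurd (hmin ⟨Nat.pos_of_ne_zero hr, this⟩) (not_le.mpr hrlt)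

private lemma cancel_s {s m t : ℕ} (hm : 3 ≤ m) (hsm : Nat.gcd s m = 1) (ht2 : 2 ∣ t)
    (h : 2 * m ∣ s * t) : 2 * m ∣ t := by
  rcases Nat.even_or_odd s with hse | hso
  · have hmodd : ¬ (2 ∣ m) := by
      intro h2m
      have : 2 ∣ Nat.gcd s m := Nat.dvd_gcd hse.two_dvd h2m
      omega
    have hms : Nat.Coprime m s := Nat.Coprime.symm hsm
    have hmt : m ∣ t := hms.dvd_of_dvd_mul_left ((dvd_mul_left m 2).trans h)
    have h2m : Nat.Coprime 2 m := Nat.coprime_two_left.mpr (Nat.odd_iff.mpr (by omega))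
    exact Nat.Coprime.mul_dvd_of_dvd_of_dvd h2m ht2 hmt
  · have h1 : Nat.Coprime (2 * m) s :=
      (Nat.Coprime.mul_right (Nat.coprime_two_right.mpr hso) hsm).symm
    exact h1.dvd_of_dvd_mul_left h

private lemma minpoly_isLeast (p : ℕ) [Fact p.Prime] (a : AlgebraicClosure (ZMod p)) :
    IsLeast {k : ℕ | 0 < k ∧ a ^ p ^ k = a} (minpoly (ZMod p) a).natDegree := by
  classical
  have hp1 : 1 < p := (Fact.out : p.Prime).one_lt
  have hint : IsIntegral (ZMod p) a := (Algebra.IsAlgebraic.isAlgebraic (R := ZMod p) a).isIntegral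
  have hd0 : 0 < (minpoly (ZMod p) a).natDegree := minpoly.natDegree_pos hint
  haveI := IntermediateField.adjoin.finiteDimensional hint
  haveI : Finite ((ZMod p)⟮a⟯) := Module.finite_of_finite (ZMod p)
  haveI : Fintype ((ZMod p)⟮a⟯) := Fintype.ofFinite _
  have hcard : Fintype.card ((ZMod p)⟮a⟯) = p ^ (minpoly (ZMod p) a).natDegree := by
    rw [Module.card_eq_pow_finrank (K := ZMod p), ZMod.card, IntermediateField.adjoin.finrank hint]
  constructor
  · refine ⟨hd0, ?_⟩
    have h1 : (AdjoinSimple.gen (ZMod p) a) ^ (Fintype.card ((ZMod p)⟮a⟯)) =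
        AdjoinSimple.gen (ZMod p) a := FiniteField.pow_card _
    have h2 := congrArg (fun y : (ZMod p)⟮a⟯ => (y : AlgebraicClosure (ZMod p))) h1
    simpa [hcard, AdjoinSimple.coe_gen] using h2
  · rintro k ⟨hk0, hka⟩
    let φ : AlgebraicClosure (ZMod p) →ₐ[ZMod p] AlgebraicClosure (ZMod p) :=
      { toFun := fun x => x ^ p ^ k
        map_one' := one_pow _
        map_mul' := fun x y => mul_pow x y _
        map_zero' := zero_pow (pow_ne_zero k (by omega))
        map_add' := fun x y => add_pow_char_pow x y p k
        commutes' := fun c => by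
          show ((algebraMap (ZMod p) (AlgebraicClosure (ZMod p))) c) ^ p ^ k = _
          rw [← map_pow, ZMod.pow_card_pow] }
    have hsub : Algebra.adjoin (ZMod p) {a} ≤
        AlgHom.equalizer φ (AlgHom.id (ZMod p) (AlgebraicClosure (ZMod p))) :=
      Algebra.adjoin_le (by rintro x rfl; exact hka)
    have hfix : ∀ y : (ZMod p)⟮a⟯, (y : AlgebraicClosure (ZMod p)) ^ p ^ k = (y : AlgebraicClosure (ZMod p)) := by
      intro y
      have hy : (y : AlgebraicClosure (ZMod p)) ∈ ((ZMod p)⟮a⟯).toSubalgebra := y.2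
      rw [IntermediateField.adjoin_simple_toSubalgebra_of_isAlgebraic hint.isAlgebraic] at hy
      exact hsub hy
    set P : (AlgebraicClosure (ZMod p))[X] := X ^ p ^ k - X with hP
    have hne : P ≠ 0 := FiniteField.X_pow_card_pow_sub_X_ne_zero _ hk0.ne' hp1
    have hdeg : P.natDegree = p ^ k :=
      FiniteField.X_pow_card_pow_sub_X_natDegree_eq _ hk0.ne' hp1
    have hroot : ∀ y : (ZMod p)⟮a⟯, (y : AlgebraicClosure (ZMod p)) ∈ P.roots.toFinset := by
      intro y
      rw [Multiset.mem_toFinset, Polynomial.mem_roots hne, hP]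
      simp only [Polynomial.IsRoot, Polynomial.eval_sub, Polynomial.eval_pow,
        Polynomial.eval_X, sub_eq_zero]
      exact hfix y
    have hinj : Fintype.card ((ZMod p)⟮a⟯) ≤ P.roots.toFinset.card := by
      rw [← Fintype.card_coe]
      refine Fintype.card_le_of_injective (fun y => ⟨(y : AlgebraicClosure (ZMod p)), hroot y⟩) ?_
      intro x y hxy
      simp only [Subtype.mk.injEq] at hxy
      exact Subtype.ext hxy
    rw [hcard] at hinj
    have h5 : P.roots.toFinset.card ≤ p ^ k := by
      calc _ ≤ Multiset.card P.roots := Multiset.toFinset_card_le _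
      _ ≤ _ := hdeg ▸ Polynomial.card_roots' _
    exact (Nat.pow_le_pow_iff_right hp1).mp (le_trans hinj h5)

theorem minpoly_degree_odd_order_case
    (p m : ℕ) [Fact p.Prime] (hp2 : 2 < p) (hm : 3 ≤ m)
    (hgcd : Nat.gcd p m = 1)
    (u : ℕ) (hu : IsLeast {k : ℕ | 0 < k ∧ p ^ k ≡ 1 [MOD 2 * m]} u)
    (ζ : AlgebraicClosure (ZMod p)) (hζ : IsPrimitiveRoot ζ (2 * m))
    (i : AlgebraicClosure (ZMod p)) (hi : IsPrimitiveRoot i 4)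
    (s : ℕ) (hs : 0 < s) (hsm : Nat.gcd s m = 1)
    (hp4 : p % 4 = 3) (huodd : Odd u) :
    (minpoly (ZMod p) (i * (ζ ^ s + ζ⁻¹ ^ s))).natDegree = 2 * u := by
  have hp : p.Prime := Fact.out
  have hppos : 0 < p := hp.pos
  obtain ⟨⟨hu0, hu1⟩, humin⟩ := id hu
  have hK2 : (2 : AlgebraicClosure (ZMod p)) ≠ 0 := by
    have h2 : ((2 : ℕ) : AlgebraicClosure (ZMod p)) ≠ 0 := by
      rw [Ne, CharP.cast_eq_zero_iff _ p]
      intro hdvd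
      have := Nat.le_of_dvd (by norm_num) hdvd
      omega
    simpa using h2
  have hζ2m : ζ ^ (2 * m) = 1 := hζ.pow_eq_one
  have hζ0 : ζ ≠ 0 := hζ.ne_zero (by omega)
  have hi4 : i ^ 4 = 1 := hi.pow_eq_one
  have hi0 : i ≠ 0 := hi.ne_zero (by norm_num)
  have hi2 : i ^ 2 = -1 := by
    have h0 : (i ^ 2 - 1) * (i ^ 2 + 1) = 0 := by linear_combination hi4
    rcases mul_eq_zero.mp h0 with h | h
    · exact absurd (sub_eq_zero.mp h) (hi.pow_ne_one_of_pos_of_lt two_ne_zero (by norm_num))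
    · linear_combination h
  have hpodd : Odd p := hp.odd_of_ne_two (by omega)
  have hpmod : p ≡ 3 [MOD 4] := by unfold Nat.ModEq; omega
  have h9mod : (9 : ℕ) ≡ 1 [MOD 4] := by decide
  have hiodd : ∀ k : ℕ, Odd k → i ^ p ^ k = -i := by
    intro k hk
    have h1 : p ^ k ≡ 3 [MOD 4] := by
      obtain ⟨t, rfl⟩ := hk
      calc p ^ (2 * t + 1) ≡ 3 ^ (2 * t + 1) [MOD 4] := hpmod.pow _
      _ = 9 ^ t * 3 := by rw [pow_add, pow_mul]; norm_num
      _ ≡ 1 ^ t * 3 [MOD 4] := Nat.ModEq.mul_right _ (h9mod.pow _)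
      _ = 3 := by ring
    calc i ^ p ^ k = i ^ 3 := pow_eq_pow_of_modEq_aux hi4 h1
    _ = -i := by linear_combination i * hi2
  have hieven : ∀ k : ℕ, Even k → i ^ p ^ k = i := by
    intro k hk
    have h1 : p ^ k ≡ 1 [MOD 4] := by
      obtain ⟨t, rfl⟩ := hk
      calc p ^ (t + t) ≡ 3 ^ (t + t) [MOD 4] := hpmod.pow _
      _ = 9 ^ t := by rw [← two_mul, pow_mul]; norm_num
      _ ≡ 1 ^ t [MOD 4] := h9mod.pow _
      _ = 1 := one_pow _
    calc i ^ p ^ k = i ^ 1 := pow_eq_pow_of_modEq_aux hi4 h1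
    _ = i := pow_one i
  have hkey : ∀ n : ℕ, (i * (ζ ^ s + ζ⁻¹ ^ s)) ^ p ^ n
      = i ^ p ^ n * (ζ ^ (s * p ^ n) + ζ⁻¹ ^ (s * p ^ n)) := by
    intro n
    rw [mul_pow, add_pow_char_pow (ζ ^ s) (ζ⁻¹ ^ s) p n, ← pow_mul, ← pow_mul]
  have hζinv2m : (ζ⁻¹) ^ (2 * m) = 1 := by rw [inv_pow, hζ2m, inv_one]
  have hζc : ∀ a b : ℕ, a ≡ b [MOD 2 * m] → ζ ^ a = ζ ^ b :=
    fun a b h => pow_eq_pow_of_modEq_aux hζ2m h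
  have hζic : ∀ a b : ℕ, a ≡ b [MOD 2 * m] → ζ⁻¹ ^ a = ζ⁻¹ ^ b :=
    fun a b h => pow_eq_pow_of_modEq_aux hζinv2m h
  have hp2u : ∀ j : ℕ, u ∣ j → p ^ j ≡ 1 [MOD 2 * m] := by
    rintro j ⟨c, rfl⟩
    calc p ^ (u * c) = (p ^ u) ^ c := pow_mul p u c
    _ ≡ 1 ^ c [MOD 2 * m] := hu1.pow _
    _ = 1 := one_pow _
  have hmem : (i * (ζ ^ s + ζ⁻¹ ^ s)) ^ p ^ (2 * u) = i * (ζ ^ s + ζ⁻¹ ^ s) := by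
    have h1 : s * p ^ (2 * u) ≡ s [MOD 2 * m] := by
      have := (hp2u (2 * u) (dvd_mul_left u 2)).mul_left s
      simpa using this
    rw [hkey, hieven _ (even_two_mul u), hζc _ _ h1, hζic _ _ h1]
  have hβ : ζ ^ s + ζ⁻¹ ^ s ≠ 0 := by
    intro h0
    rw [inv_pow] at h0
    have hs0 : ζ ^ s ≠ 0 := pow_ne_zero _ hζ0
    have h1 : (ζ ^ s) ^ 2 + 1 = 0 := by
      field_simp at h0
      linear_combination h0
    have h2 : ζ ^ (s * 4) = 1 := by
      rw [pow_mul]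
      linear_combination ((ζ ^ s) ^ 2 - 1) * h1
    have h3 : 2 * m ∣ s * 4 := (hζ.pow_eq_one_iff_dvd _).mp h2
    have h4 : m ∣ 2 * s := by
      have h5 : 2 * m ∣ 2 * (2 * s) := by
        have : s * 4 = 2 * (2 * s) := by ring
        rwa [this] at h3
      exact (Nat.mul_dvd_mul_iff_left (by norm_num : 0 < 2)).mp h5
    have h6 : m ∣ 2 := (Nat.Coprime.symm hsm).dvd_of_dvd_mul_right h4
    have := Nat.le_of_dvd (by norm_num) h6
    omega
  -- conclude via uniqueness of least element
  refine (minpoly_isLeast p (i * (ζ ^ s + ζ⁻¹ ^ s))).unique ⟨⟨by omega, hmem⟩, ?_⟩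
  rintro k ⟨hk0, hka⟩
  by_contra hlt
  push_neg at hlt
  have h2k : (i * (ζ ^ s + ζ⁻¹ ^ s)) ^ p ^ (2 * k) = i * (ζ ^ s + ζ⁻¹ ^ s) := by
    have h1 : (2 : ℕ) * k = k + k := two_mul k
    rw [h1, pow_add, pow_mul, hka, hka]
  have heq : ζ ^ (s * p ^ (2 * k)) + (ζ ^ (s * p ^ (2 * k)))⁻¹ = ζ ^ s + (ζ ^ s)⁻¹ := by
    have h3 := (hkey (2 * k)).symm.trans h2k
    rw [hieven _ (even_two_mul k)] at h3
    have h4 := mul_left_cancel₀ hi0 h3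
    rwa [inv_pow, inv_pow] at h4
  have hx0 : ζ ^ (s * p ^ (2 * k)) ≠ 0 := pow_ne_zero _ hζ0
  have hs0 : ζ ^ s ≠ 0 := pow_ne_zero _ hζ0
  have hpk_odd : Odd (p ^ (2 * k)) := hpodd.pow
  have hpk1 : 1 ≤ p ^ (2 * k) := Nat.one_le_pow _ _ hppos
  have hcop2 : Nat.Coprime u 2 := Nat.coprime_two_right.mpr huodd
  have hudvdk : u ∣ k := by
    rcases sum_inv_cases hx0 hs0 heq with hcase | hcase
    · -- ζ^{s p^{2k}} = ζ^s
      have hle : s ≤ s * p ^ (2 * k) := Nat.le_mul_of_pos_right s (by positivity)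
      have h5 : ζ ^ (s * p ^ (2 * k) - s) * ζ ^ s = 1 * ζ ^ s := by
        rw [← pow_add, Nat.sub_add_cancel hle, one_mul]; exact hcase
      have h6 : ζ ^ (s * p ^ (2 * k) - s) = 1 := mul_right_cancel₀ hs0 h5
      have h7 : 2 * m ∣ s * (p ^ (2 * k) - 1) := by
        have heq2 : s * p ^ (2 * k) - s = s * (p ^ (2 * k) - 1) := by
          rw [Nat.mul_sub, mul_one]
        exact heq2 ▸ (hζ.pow_eq_one_iff_dvd _).mp h6
      have h8 : 2 * m ∣ p ^ (2 * k) - 1 := by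
        refine cancel_s hm hsm ?_ h7
        have := Nat.odd_iff.mp hpk_odd
        omega
      have h9 : p ^ (2 * k) ≡ 1 [MOD 2 * m] :=
        ((Nat.modEq_iff_dvd' hpk1).mpr h8).symm
      exact hcop2.dvd_of_dvd_mul_left (least_dvd hu h9)
    · -- ζ^{s p^{2k}} * ζ^s = 1
      have h6 : ζ ^ (s * p ^ (2 * k) + s) = 1 := by rw [pow_add]; exact hcase
      have h7 : 2 * m ∣ s * (p ^ (2 * k) + 1) := by
        have heq2 : s * p ^ (2 * k) + s = s * (p ^ (2 * k) + 1) := by ring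
        exact heq2 ▸ (hζ.pow_eq_one_iff_dvd _).mp h6
      have h8 : 2 * m ∣ p ^ (2 * k) + 1 := by
        refine cancel_s hm hsm ?_ h7
        have := Nat.odd_iff.mp hpk_odd
        omega
      have hz : ((2 * m : ℕ) : ℤ) ∣ ((p : ℤ) ^ (2 * k) + 1) := by
        have := Int.natCast_dvd_natCast.mpr h8
        push_cast at this
        exact this
      have h9 : p ^ (4 * k) ≡ 1 [MOD 2 * m] := by
        rw [Nat.modEq_iff_dvd]
        push_cast
        have hring : (1 : ℤ) - (p : ℤ) ^ (4 * k)
            = -(((p : ℤ) ^ (2 * k) + 1) * ((p : ℤ) ^ (2 * k) - 1)) := by ring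
        rw [hring]
        exact dvd_neg.mpr (hz.mul_right _)
      have hcop4 : Nat.Coprime u 4 := by
        have : (4 : ℕ) = 2 * 2 := by norm_num
        rw [this]
        exact Nat.Coprime.mul_right hcop2 hcop2
      exact hcop4.dvd_of_dvd_mul_left (least_dvd hu h9)
  obtain ⟨c, hc⟩ := hudvdk
  have hk_eq : k = u := by
    rcases Nat.lt_or_ge c 2 with h | h
    · interval_cases c <;> omega
    · have h2 : u * 2 ≤ u * c := Nat.mul_le_mul_left u h
      omega
  have hka' : (i * (ζ ^ s + ζ⁻¹ ^ s)) ^ p ^ u = i * (ζ ^ s + ζ⁻¹ ^ s) := hk_eq ▸ hka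
  have hmodu : s * p ^ u ≡ s [MOD 2 * m] := by
    have := hu1.mul_left s
    simpa using this
  have hfin : i * (ζ ^ s + ζ⁻¹ ^ s) = -(i * (ζ ^ s + ζ⁻¹ ^ s)) := by
    conv_lhs => rw [← hka']
    rw [hkey, hiodd _ huodd, hζc _ _ hmodu, hζic _ _ hmodu, neg_mul]
  have hzero : i * (ζ ^ s + ζ⁻¹ ^ s) = 0 := by
    have h2 : (2 : AlgebraicClosure (ZMod p)) * (i * (ζ ^ s + ζ⁻¹ ^ s)) = 0 := by
      linear_combination hfin
    exact (mul_eq_zero.mp h2).resolve_left hK2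
  exact mul_ne_zero hi0 hβ hzero
end
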